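/- arXiv:1107.3790 — 4 statements merged into one kernel-verified Lean document; each statement's English description precedes it below -/
import Mathlib

section
/- Let μ be a Radon diffuse measure on (0,1] and M(t) = exp(μ((t,1])). If a continuous function x : (0,1] → ℝ satisfies x(t) = ∫₀^t x(r) dμ(r) for all t ∈ (0,1] (with the integral existing as a limit of ∫_ε^t as ε → 0), then the function t ↦ x(t) M(t) is constant on (0,1]. -/
open MeasureTheory Filter Real Set Topology

lemma measure_Ioc_toReal_continuous (ν : Measure ℝ) [IsFiniteMeasure ν] [NullSingletonClass ν] (c : ℝ) :
    Continuous fun r => (ν (Ioc c r)).toReal := by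
  rw [Metric.continuous_iff]
  intro a ε hε
  have hpos : ∀ n : ℕ, (0:ℝ) < 1/(n+1) := fun n => by positivity
  have hanti : Antitone fun n : ℕ => Ioo (a - 1/(n+1)) (a + 1/(n+1)) := by
    intro m n hmn
    have h1 : (1:ℝ)/(n+1) ≤ 1/(m+1) := by
      apply one_div_le_one_div_of_le
      · positivity
      · have : (m:ℝ) ≤ n := Nat.cast_le.mpr hmn; linarith
    exact Ioo_subset_Ioo (by linarith) (by linarith)
  have hiInter : ⋂ n : ℕ, Ioo (a - 1/(n+1)) (a + 1/(n+1)) = {a} := by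
    ext y
    simp only [mem_iInter, mem_Ioo, mem_singleton_iff]
    constructor
    · intro h
      by_contra hy
      obtain ⟨n, hn⟩ := exists_nat_one_div_lt (show 0 < |y - a| by
        simpa [abs_pos, sub_eq_zero] using hy)
      have h2 := h n
      have : |y - a| < 1/(n+1) := abs_sub_lt_iff.mpr ⟨by linarith [h2.2], by linarith [h2.1]⟩
      linarith
    · rintro rfl n
      constructor <;> nlinarith [hpos n]
  have hkey : Tendsto (fun n : ℕ => ν (Ioo (a - 1/(n+1)) (a + 1/(n+1)))) atTop (𝓝 0) := by
    have := tendsto_measure_iInter_atTop (μ := ν)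
      (s := fun n : ℕ => Ioo (a - 1/(n+1)) (a + 1/(n+1)))
      (fun n => measurableSet_Ioo.nullMeasurableSet) hanti ⟨0, measure_ne_top ν _⟩
    rwa [hiInter, measure_singleton] at this
  have hkey2 : Tendsto (fun n : ℕ => (ν (Ioo (a - 1/(n+1)) (a + 1/(n+1)))).toReal) atTop (𝓝 0) := by
    have := (ENNReal.tendsto_toReal (by simp)).comp hkey
    simpa [Function.comp_def] using this
  obtain ⟨n, hn⟩ := (hkey2.eventually (eventually_lt_nhds hε)).exists
  refine ⟨1/(n+1), hpos n, fun r hr => ?_⟩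
  rw [Real.dist_eq] at hr ⊢
  have hsub : ∀ u v : ℝ, u ≤ v → |r - a| < 1/(n+1) →
      True := fun _ _ _ _ => trivial
  -- main estimate
  have hestim : ∀ u v : ℝ, u ≤ v → Ioc u v ⊆ Ioo (a - 1/(n+1)) (a + 1/(n+1)) →
      |(ν (Ioc c v)).toReal - (ν (Ioc c u)).toReal| < ε := by
    intro u v huv hsubs
    have hle : ν (Ioc c u) ≤ ν (Ioc c v) := measure_mono (Ioc_subset_Ioc_right huv)
    have hsplit : ν (Ioc c v) ≤ ν (Ioc c u) + ν (Ioc u v) := by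
      refine le_trans (measure_mono ?_) (measure_union_le _ _)
      intro y hy
      rcases le_or_gt y u with h | h
      · exact Or.inl ⟨hy.1, h⟩
      · exact Or.inr ⟨h, hy.2⟩
    have h1 : (ν (Ioc c v)).toReal - (ν (Ioc c u)).toReal ≤ (ν (Ioc u v)).toReal := by
      have := ENNReal.toReal_mono (by finiteness) hsplit
      rw [ENNReal.toReal_add (by finiteness) (by finiteness)] at this
      linarith
    have h2 : (ν (Ioc u v)).toReal ≤ (ν (Ioo (a - 1/(n+1)) (a + 1/(n+1)))).toReal :=
      ENNReal.toReal_mono (by finiteness) (measure_mono hsubs)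
    have h3 : (ν (Ioc c u)).toReal ≤ (ν (Ioc c v)).toReal :=
      ENNReal.toReal_mono (by finiteness) hle
    rw [abs_sub_lt_iff]
    constructor <;> [linarith; linarith]
  rcases le_total r a with h | h
  · rw [abs_sub_comm]
    refine hestim r a h fun y hy => ?_
    have h1 : a - r < 1/(n+1) := by rcases abs_lt.mp hr with ⟨h1, h2⟩; linarith
    exact ⟨by linarith [hy.1], by linarith [hy.2, hpos n]⟩
  · refine hestim a r h fun y hy => ?_
    have h1 : r - a < 1/(n+1) := by rcases abs_lt.mp hr with ⟨h1, h2⟩; linarith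
    exact ⟨by linarith [hy.1, hpos n], by linarith [hy.2]⟩

/-- Deterministic uniqueness lemma: if `μ` is a diffuse Radon measure on `(0,1]`,
`M(t) = exp(μ((t,1]))`, and a continuous `x : (0,1] → ℝ` satisfies
`x(t) = lim_{ε→0} ∫_ε^t x dμ` for all `t ∈ (0,1]`, then `x·M` is constant on `(0,1]`. -/
theorem homogeneous_solution_mul_M_const
    (μ : Measure ℝ) [NullSingletonClass μ]
    (hfin : ∀ t : ℝ, 0 < t → μ (Ioc t 1) ≠ ⊤)
    (x : ℝ → ℝ) (hx : ContinuousOn x (Ioc 0 1))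
    (heq : ∀ t ∈ Ioc (0:ℝ) 1,
      Tendsto (fun ε => ∫ r in Ioc ε t, x r ∂μ) (nhdsWithin 0 (Ioi 0)) (nhds (x t))) :
    ∀ s ∈ Ioc (0:ℝ) 1, ∀ t ∈ Ioc (0:ℝ) 1,
      x s * Real.exp ((μ (Ioc s 1)).toReal) = x t * Real.exp ((μ (Ioc t 1)).toReal) := by
  have hfinIoc : ∀ p q : ℝ, 0 < p → q ≤ 1 → μ (Ioc p q) ≠ ⊤ := fun p q hp hq =>
    ne_top_of_le_ne_top (hfin p hp) (measure_mono (Ioc_subset_Ioc_right hq))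
  -- integrability of x on compact subintervals
  have hint : ∀ p q : ℝ, 0 < p → q ≤ 1 → IntegrableOn x (Ioc p q) μ := by
    intro p q hp hq
    have hsub : Ioc p q ⊆ Ioc 0 1 := fun r hr => ⟨lt_trans hp hr.1, le_trans hr.2 hq⟩
    have hmeas : AEStronglyMeasurable x (μ.restrict (Ioc p q)) :=
      (hx.mono hsub).aestronglyMeasurable measurableSet_Ioc
    rcases lt_or_ge q p with h | h
    · rw [IntegrableOn, Ioc_eq_empty (not_lt.mpr h.le), Measure.restrict_empty]
      exact integrable_zero_measure
    obtain ⟨C, hC⟩ := isCompact_Icc.exists_bound_of_continuousOn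
      (hx.mono (fun r (hr : r ∈ Icc p q) => ⟨lt_of_lt_of_le hp hr.1, le_trans hr.2 hq⟩))
    refine ⟨hmeas, HasFiniteIntegral.restrict_of_bounded (C := C)
      (hfinIoc p q hp hq).lt_top ?_⟩
    exact (ae_restrict_iff' measurableSet_Ioc).2
      (ae_of_all _ fun r hr => hC r (Ioc_subset_Icc_self hr))
  -- difference formula
  have hstepA : ∀ p q : ℝ, 0 < p → p ≤ q → q ≤ 1 → x q = x p + ∫ r in Ioc p q, x r ∂μ := by
    intro p q hp hpq hq
    have hq0 : 0 < q := lt_of_lt_of_le hp hpq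
    have hq' := heq q ⟨hq0, hq⟩
    have hp' := heq p ⟨hp, hpq.trans hq⟩
    have hsplit : ∀ᶠ ε in 𝓝[>] (0:ℝ), (∫ r in Ioc ε q, x r ∂μ)
        = (∫ r in Ioc ε p, x r ∂μ) + ∫ r in Ioc p q, x r ∂μ := by
      filter_upwards [Ioo_mem_nhdsGT hp] with ε hε
      rw [← setIntegral_union (Ioc_disjoint_Ioc_of_le le_rfl) measurableSet_Ioc
        (hint ε p hε.1 (hpq.trans hq)) (hint p q hp hq),
        Ioc_union_Ioc_eq_Ioc hε.2.le hpq]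
    have h2 : Tendsto (fun ε => (∫ r in Ioc ε p, x r ∂μ) + ∫ r in Ioc p q, x r ∂μ)
        (𝓝[>] (0:ℝ)) (𝓝 (x p + ∫ r in Ioc p q, x r ∂μ)) := hp'.add tendsto_const_nhds
    exact tendsto_nhds_unique (hq'.congr' hsplit) h2
  -- reduce to s ≤ t
  suffices H : ∀ s ∈ Ioc (0:ℝ) 1, ∀ t ∈ Ioc (0:ℝ) 1, s ≤ t →
      x s * Real.exp ((μ (Ioc s 1)).toReal) = x t * Real.exp ((μ (Ioc t 1)).toReal) by
    intro s hs t ht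
    rcases le_total s t with h | h
    · exact H s hs t ht h
    · exact (H t ht s hs h).symm
  intro s hs t ht hst
  obtain ⟨hs0, hs1⟩ := hs
  obtain ⟨ht0, ht1⟩ := ht
  set G : ℝ → ℝ := fun r => (μ (Ioc r 1)).toReal with hGdef
  have hGsplit : ∀ p q : ℝ, 0 < p → p ≤ q → q ≤ 1 → G p = (μ (Ioc p q)).toReal + G q := by
    intro p q hp hpq hq
    have hu : Ioc p 1 = Ioc p q ∪ Ioc q 1 := (Ioc_union_Ioc_eq_Ioc hpq hq).symm
    simp only [hGdef]
    rw [hu, measure_union (Ioc_disjoint_Ioc_of_le le_rfl) measurableSet_Ioc,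
      ENNReal.toReal_add (hfinIoc p q hp hq) (hfin q (lt_of_lt_of_le hp hpq))]
  have hGanti : ∀ p : ℝ, s ≤ p → G p ≤ G s := fun p h =>
    ENNReal.toReal_mono (hfin s hs0) (measure_mono (Ioc_subset_Ioc_left h))
  have hG0 : ∀ p : ℝ, 0 ≤ G p := fun p => ENNReal.toReal_nonneg
  -- bound on |x|
  obtain ⟨B, hB⟩ := isCompact_Icc.exists_bound_of_continuousOn
    (hx.mono (fun r (hr : r ∈ Icc s 1) => ⟨lt_of_lt_of_le hs0 hr.1, hr.2⟩))
  have hB0 : 0 ≤ B := le_trans (norm_nonneg _) (hB s ⟨le_refl s, hs1⟩)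
  -- the auxiliary finite measure and cumulative function
  set ν := μ.restrict (Ioc (s/2) 1) with hνdef
  haveI : IsFiniteMeasure ν := by
    refine ⟨?_⟩
    rw [hνdef, Measure.restrict_apply_univ]
    exact (hfin (s/2) (by linarith)).lt_top
  haveI : NullSingletonClass ν := by
    refine ⟨fun a => ?_⟩
    rw [hνdef, Measure.restrict_apply (measurableSet_singleton a)]
    exact measure_mono_null inter_subset_left (measure_singleton a)
  have hνeq : ∀ p q : ℝ, s ≤ p → q ≤ 1 → ν (Ioc p q) = μ (Ioc p q) := by
    intro p q hp hq
    have hss : Ioc p q ⊆ Ioc (s/2) 1 := fun r hr => ⟨by linarith [hr.1], le_trans hr.2 hq⟩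
    rw [hνdef, Measure.restrict_apply measurableSet_Ioc, inter_eq_self_of_subset_left hss]
  set F : ℝ → ℝ := fun r => (ν (Ioc s r)).toReal with hFdef
  have hFcont : Continuous F := measure_Ioc_toReal_continuous ν s
  have hF : ∀ p q : ℝ, s ≤ p → p ≤ q → q ≤ 1 → F q = F p + (μ (Ioc p q)).toReal := by
    intro p q h1 h2 h3
    simp only [hFdef]
    rw [← hνeq p q h1 h3, ← Ioc_union_Ioc_eq_Ioc h1 h2,
      measure_union (Ioc_disjoint_Ioc_of_le le_rfl) measurableSet_Ioc,
      ENNReal.toReal_add (measure_ne_top ν _) (measure_ne_top ν _)]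
  -- uniform continuity
  have hFuc := (isCompact_Icc (a := s) (b := 1)).uniformContinuousOn_of_continuous
    hFcont.continuousOn
  have hxuc := (isCompact_Icc (a := s) (b := 1)).uniformContinuousOn_of_continuous
    (hx.mono (fun r (hr : r ∈ Icc s 1) => ⟨lt_of_lt_of_le hs0 hr.1, hr.2⟩))
  rw [Metric.uniformContinuousOn_iff] at hFuc hxuc
  -- per-piece estimate
  have hpiece : ∀ ε₁ : ℝ, 0 < ε₁ → ε₁ ≤ 1/2 → ∀ p q : ℝ, s ≤ p → p ≤ q → q ≤ 1 →
      (μ (Ioc p q)).toReal ≤ ε₁ → (∀ r ∈ Icc p q, |x r - x p| ≤ ε₁) →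
      |x q * Real.exp (G q) - x p * Real.exp (G p)|
        ≤ Real.exp (G s) * (1 + 2*B) * ε₁ * (μ (Ioc p q)).toReal := by
    intro ε₁ hε₁0 hε₁half p q hsp hpq hq1 hΔle hosc
    set Δ := (μ (Ioc p q)).toReal with hΔdef
    have hΔ0 : 0 ≤ Δ := ENNReal.toReal_nonneg
    have hp0 : 0 < p := lt_of_lt_of_le hs0 hsp
    have hxq := hstepA p q hp0 hpq hq1
    set I := ∫ r in Ioc p q, x r ∂μ with hIdef
    have hxp : |x p| ≤ B := hB p ⟨hsp, hpq.trans hq1⟩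
    -- integral estimate
    have hIdiff : |I - x p * Δ| ≤ ε₁ * Δ := by
      have hconst : ∫ _ in Ioc p q, x p ∂μ = Δ * x p := by
        rw [setIntegral_const, smul_eq_mul]; rfl
      have hsub : I - x p * Δ = ∫ r in Ioc p q, (x r - x p) ∂μ := by
        rw [integral_sub (hint p q hp0 hq1)
          (integrableOn_const (hfinIoc p q hp0 hq1)), hconst, hIdef]
        ring
      rw [hsub]
      have hbd := norm_setIntegral_le_of_norm_le_const (μ := μ) (s := Ioc p q) (C := ε₁) (f := fun r => x r - x p)
        (hfinIoc p q hp0 hq1).lt_top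
        (fun r hr => by simpa [Real.norm_eq_abs] using hosc r (Ioc_subset_Icc_self hr))
      simpa [Real.norm_eq_abs, hΔdef, measureReal_def] using hbd
    -- exponential estimate
    have he1 : Δ + 1 ≤ Real.exp Δ := Real.add_one_le_exp Δ
    have he3 : (1 - Δ) * Real.exp Δ ≤ 1 := by
      have h1 : 1 - Δ ≤ Real.exp (-Δ) := by linarith [Real.add_one_le_exp (-Δ)]
      calc (1 - Δ) * Real.exp Δ ≤ Real.exp (-Δ) * Real.exp Δ :=
            mul_le_mul_of_nonneg_right h1 (Real.exp_pos Δ).le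
        _ = 1 := by rw [← Real.exp_add]; simp
    have hΔhalf : Δ ≤ 1/2 := le_trans hΔle hε₁half
    have hexp : Real.exp Δ - 1 - Δ ≤ 2 * Δ * ε₁ := by
      nlinarith [Real.exp_pos Δ, sq_nonneg Δ, mul_nonneg hΔ0 hΔ0]
    have hexp0 : 0 ≤ Real.exp Δ - 1 - Δ := by linarith
    -- main identity
    have hEq : x q * Real.exp (G q) - x p * Real.exp (G p)
        = Real.exp (G q) * ((I - x p * Δ) - x p * (Real.exp Δ - 1 - Δ)) := by
      rw [hGsplit p q hp0 hpq hq1, hxq, Real.exp_add]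
      ring
    rw [hEq, abs_mul, Real.abs_exp]
    have h4 : |(I - x p * Δ) - x p * (Real.exp Δ - 1 - Δ)| ≤ (1 + 2*B) * ε₁ * Δ := by
      have h5 : |x p * (Real.exp Δ - 1 - Δ)| ≤ B * (2 * Δ * ε₁) := by
        rw [abs_mul]
        apply mul_le_mul hxp (by rwa [abs_of_nonneg hexp0]) (abs_nonneg _) hB0
      calc |(I - x p * Δ) - x p * (Real.exp Δ - 1 - Δ)|
          ≤ |I - x p * Δ| + |x p * (Real.exp Δ - 1 - Δ)| := abs_sub _ _
        _ ≤ ε₁ * Δ + B * (2 * Δ * ε₁) := add_le_add hIdiff h5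
        _ = (1 + 2*B) * ε₁ * Δ := by ring
    calc Real.exp (G q) * |(I - x p * Δ) - x p * (Real.exp Δ - 1 - Δ)|
        ≤ Real.exp (G s) * ((1 + 2*B) * ε₁ * Δ) :=
          mul_le_mul (Real.exp_le_exp.mpr (hGanti q (hsp.trans hpq))) h4 (abs_nonneg _)
            (Real.exp_pos _).le
      _ = Real.exp (G s) * (1 + 2*B) * ε₁ * Δ := by ring
  -- main epsilon argument
  have hmain : ∀ ε : ℝ, 0 < ε → |x t * Real.exp (G t) - x s * Real.exp (G s)| ≤ ε := by
    intro ε hε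
    rcases eq_or_lt_of_le hst with rfl | hlt
    · simp; linarith
    set C := Real.exp (G s) * (1 + 2*B) with hCdef
    have hC : 0 < C := mul_pos (Real.exp_pos _) (by linarith)
    set K := G s with hKdef
    have hK0 : 0 ≤ K := hG0 s
    set ε₁ := min (1/2) (ε / (C * (K+1))) with hε₁def
    have hε₁0 : 0 < ε₁ := lt_min (by norm_num) (div_pos hε (mul_pos hC (by linarith)))
    have hε₁half : ε₁ ≤ 1/2 := min_le_left _ _
    obtain ⟨δ₁, hδ₁0, hδ₁⟩ := hxuc ε₁ hε₁0
    obtain ⟨δ₂, hδ₂0, hδ₂⟩ := hFuc ε₁ hε₁0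
    set δ := min δ₁ δ₂ with hδdef
    have hδ0 : 0 < δ := lt_min hδ₁0 hδ₂0
    obtain ⟨n, hn⟩ := exists_nat_gt ((t - s)/δ)
    have hn0 : 0 < (n:ℝ) := lt_trans (div_pos (by linarith) hδ0) hn
    have hmesh : (t - s)/n < δ := by
      rw [div_lt_iff₀ hn0, mul_comm]
      exact (div_lt_iff₀ hδ0).mp hn
    have hmesh0 : 0 ≤ (t - s)/n := div_nonneg (by linarith) hn0.le
    set φ : ℕ → ℝ := fun i => s + i * ((t - s)/n) with hφdef
    have hφ0 : φ 0 = s := by simp [hφdef]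
    have hφn : φ n = t := by
      simp only [hφdef]
      field_simp
      ring
    have hφmono : ∀ i j : ℕ, i ≤ j → φ i ≤ φ j := by
      intro i j h
      simp only [hφdef]
      have hij : (i:ℝ) ≤ j := Nat.cast_le.mpr h
      nlinarith [hmesh0]
    have hφs : ∀ i : ℕ, s ≤ φ i := fun i => hφ0 ▸ hφmono 0 i (Nat.zero_le i)
    have hφt : ∀ i : ℕ, i ≤ n → φ i ≤ t := fun i h => hφn ▸ hφmono i n h
    have hφstep : ∀ i : ℕ, φ (i+1) - φ i = (t - s)/n := by
      intro i
      simp only [hφdef]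
      push_cast
      ring
    have hmem : ∀ i : ℕ, i ≤ n → φ i ∈ Icc s (1:ℝ) :=
      fun i h => ⟨hφs i, le_trans (hφt i h) ht1⟩
    -- μ-increment bound
    have hΔbound : ∀ i : ℕ, i < n → (μ (Ioc (φ i) (φ (i+1)))).toReal ≤ ε₁ := by
      intro i hi
      have h1 : s ≤ φ i := hφs i
      have h2 : φ i ≤ φ (i+1) := hφmono i (i+1) (by omega)
      have h3 : φ (i+1) ≤ 1 := (hmem (i+1) hi).2
      have hμF : (μ (Ioc (φ i) (φ (i+1)))).toReal = F (φ (i+1)) - F (φ i) := by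
        rw [hF (φ i) (φ (i+1)) h1 h2 h3]
        ring
      have hdist : dist (φ (i+1)) (φ i) < δ₂ := by
        rw [Real.dist_eq, hφstep i, abs_of_nonneg hmesh0]
        exact lt_of_lt_of_le hmesh (min_le_right _ _)
      have hd := hδ₂ (φ (i+1)) (hmem (i+1) hi) (φ i) (hmem i (le_of_lt hi)) hdist
      rw [Real.dist_eq] at hd
      rw [hμF]
      exact le_trans (le_abs_self _) hd.le
    -- oscillation bound
    have hoscb : ∀ i : ℕ, i < n → ∀ r ∈ Icc (φ i) (φ (i+1)), |x r - x (φ i)| ≤ ε₁ := by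
      intro i hi r hr
      obtain ⟨hr1, hr2⟩ := hr
      have hrmem : r ∈ Icc s (1:ℝ) :=
        ⟨le_trans (hφs i) hr1, le_trans hr2 (hmem (i+1) hi).2⟩
      have hdist : dist r (φ i) < δ₁ := by
        rw [Real.dist_eq, abs_of_nonneg (by linarith [hr1])]
        have h5 : φ (i+1) - φ i = (t - s)/(n:ℝ) := hφstep i
        have : r - φ i ≤ (t - s)/(n:ℝ) := h5 ▸ sub_le_sub_right hr2 (φ i)
        exact lt_of_le_of_lt this (lt_of_lt_of_le hmesh (min_le_left _ _))
      have := hδ₁ r hrmem (φ i) (hmem i (le_of_lt hi)) hdist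
      rw [Real.dist_eq] at this
      exact this.le
    -- telescoping
    have htel : x t * Real.exp (G t) - x s * Real.exp (G s)
        = ∑ i ∈ Finset.range n,
          (x (φ (i+1)) * Real.exp (G (φ (i+1))) - x (φ i) * Real.exp (G (φ i))) := by
      rw [Finset.sum_range_sub (fun i => x (φ i) * Real.exp (G (φ i))), hφ0, hφn]
    have hsumΔ : ∑ i ∈ Finset.range n, (μ (Ioc (φ i) (φ (i+1)))).toReal = G s - G t := by
      have hterm : ∀ i ∈ Finset.range n,
          (μ (Ioc (φ i) (φ (i+1)))).toReal = G (φ i) - G (φ (i+1)) := by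
        intro i hi
        rw [hGsplit (φ i) (φ (i+1)) (lt_of_lt_of_le hs0 (hφs i)) (hφmono i (i+1) (by omega))
          (hmem (i+1) (Finset.mem_range.mp hi)).2]
        ring
      rw [Finset.sum_congr rfl hterm, Finset.sum_range_sub' (fun i => G (φ i)), hφ0, hφn]
    rw [htel]
    have hGst : G t ≤ G s := hGanti t hst
    calc |∑ i ∈ Finset.range n,
          (x (φ (i+1)) * Real.exp (G (φ (i+1))) - x (φ i) * Real.exp (G (φ i)))|
        ≤ ∑ i ∈ Finset.range n,
          |x (φ (i+1)) * Real.exp (G (φ (i+1))) - x (φ i) * Real.exp (G (φ i))| :=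
          Finset.abs_sum_le_sum_abs _ _
      _ ≤ ∑ i ∈ Finset.range n, C * ε₁ * (μ (Ioc (φ i) (φ (i+1)))).toReal := by
          apply Finset.sum_le_sum
          intro i hi
          have hi' := Finset.mem_range.mp hi
          exact hpiece ε₁ hε₁0 hε₁half (φ i) (φ (i+1)) (hφs i)
            (hφmono i (i+1) (by omega)) (hmem (i+1) hi').2 (hΔbound i hi') (hoscb i hi')
      _ = C * ε₁ * (G s - G t) := by rw [← Finset.mul_sum, hsumΔ]
      _ ≤ ε := by
          have hA1 : ε₁ ≤ ε / (C * (K+1)) := min_le_right _ _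
          have hA2 : G s - G t ≤ K + 1 := by
            have := hG0 t
            simp only [hKdef]
            linarith
          have hA3 : 0 ≤ G s - G t := by linarith
          calc C * ε₁ * (G s - G t) ≤ C * (ε / (C * (K+1))) * (K + 1) := by
                apply mul_le_mul (mul_le_mul_of_nonneg_left hA1 hC.le) hA2 hA3 (by positivity)
            _ = ε := by field_simp
  have : |x t * Real.exp (G t) - x s * Real.exp (G s)| ≤ 0 := by
    by_contra h
    push_neg at h
    have h2 := hmain (|x t * Real.exp (G t) - x s * Real.exp (G s)| / 2) (by linarith)
    linarith
  have h3 : x t * Real.exp (G t) - x s * Real.exp (G s) = 0 :=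
    abs_eq_zero.mp (le_antisymm this (abs_nonneg _))
  simp only [hGdef] at h3 ⊢
  linarith
end

section
/- With μ a Radon diffuse measure on (0,1] and M(t) = exp(μ((t,1])): if M(t) does not tend to +∞ as t → 0, then the equation X_t = B^H_t + ∫₀^t X_u dμ(u) (with X continuous on [0,1], X_0 = 0) has at most one solution; and if M(t) → +∞ as t → 0, then any two solutions differ by a function of the form t ↦ C/M(t) for some random variable C. -/
set_option maxHeartbeats 1000000

open MeasureTheory Filter Real Set

/-- `ω`-wise solution of `X_t = B^H_t + ∫₀^t X_u dμ(u)` on `[0,1]` with `X_0 = 0`,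
the integral being the limit of `∫_ε^t` as `ε → 0`. -/
def IsSolutionFBMLin {Ω : Type} (μ : Measure ℝ) (B X : ℝ → Ω → ℝ) (ω : Ω) : Prop :=
  ContinuousOn (fun t => X t ω) (Icc 0 1) ∧ X 0 ω = 0 ∧
    ∀ t ∈ Ioc (0:ℝ) 1,
      Tendsto (fun ε => ∫ r in Ioc ε t, X r ω ∂μ)
        (nhdsWithin 0 (Ioi 0)) (nhds (X t ω - B t ω))

lemma finIoc (μ : Measure ℝ) (hfin : ∀ t : ℝ, 0 < t → μ (Ioc t 1) ≠ ⊤)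
    {s t : ℝ} (hs : 0 < s) (ht : t ≤ 1) : μ (Ioc s t) < ⊤ := by
  rcases le_or_gt s t with h | h
  · exact lt_of_le_of_lt (measure_mono (Ioc_subset_Ioc le_rfl ht)) (hfin s hs).lt_top
  · simp [Ioc_eq_empty (not_lt.mpr h.le)]

lemma intgOn (μ : Measure ℝ) (hfin : ∀ t : ℝ, 0 < t → μ (Ioc t 1) ≠ ⊤)
    {f : ℝ → ℝ} (hf : ContinuousOn f (Icc 0 1))
    {s t : ℝ} (hs : 0 < s) (ht : t ≤ 1) : IntegrableOn f (Ioc s t) μ := by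
  obtain ⟨K, hK⟩ := (isCompact_Icc.image_of_continuousOn hf).isBounded.exists_norm_le
  have hsub : Ioc s t ⊆ Icc 0 1 := fun r hr => ⟨(hs.trans hr.1).le, hr.2.trans ht⟩
  have hmeas : AEStronglyMeasurable f (μ.restrict (Ioc s t)) :=
    (hf.mono hsub).aestronglyMeasurable measurableSet_Ioc
  have hfm : IsFiniteMeasure (μ.restrict (Ioc s t)) :=
    ⟨by rw [Measure.restrict_apply_univ]; exact finIoc μ hfin hs ht⟩
  refine ⟨hmeas, ?_⟩
  apply MeasureTheory.HasFiniteIntegral.of_bounded (C := K)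
  exact (ae_restrict_iff' measurableSet_Ioc).2
    (Eventually.of_forall fun r hr => hK _ (mem_image_of_mem f (hsub hr)))

lemma Gadd (μ : Measure ℝ) (hfin : ∀ t : ℝ, 0 < t → μ (Ioc t 1) ≠ ⊤)
    {s t : ℝ} (hs : 0 < s) (hst : s ≤ t) (ht : t ≤ 1) :
    (μ (Ioc s 1)).toReal = (μ (Ioc s t)).toReal + (μ (Ioc t 1)).toReal := by
  rw [← ENNReal.toReal_add (finIoc μ hfin hs ht).ne (hfin t (hs.trans_le hst)),
    ← measure_union ?_ measurableSet_Ioc, Ioc_union_Ioc_eq_Ioc hst ht]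
  exact Set.disjoint_left.2 fun r hr hr' => absurd hr'.1 (not_lt.2 hr.2)

lemma unifSmall (μ : Measure ℝ) [NullSingletonClass μ] (hfin : ∀ t : ℝ, 0 < t → μ (Ioc t 1) ≠ ⊤)
    {a : ℝ} (ha : 0 < a) (ha1 : a ≤ 1) {ε : ℝ} (hε : 0 < ε) :
    ∃ δ > 0, ∀ s t : ℝ, a ≤ s → s ≤ t → t ≤ 1 → t - s ≤ δ →
      (μ (Ioc s t)).toReal ≤ ε := by
  set G : ℝ → ℝ := fun t => (μ (Ioc t 1)).toReal with hGdef
  have hdiff : ∀ s t : ℝ, a ≤ s → s ≤ t → t ≤ 1 → (μ (Ioc s t)).toReal = G s - G t := by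
    intro s t has hst ht
    have := Gadd μ hfin (ha.trans_le has) hst ht
    simp only [hGdef]; linarith
  have hcont : ContinuousOn G (Icc a 1) := by
    intro u hu
    rw [Metric.continuousWithinAt_iff]
    intro e he
    set A : ℕ → Set ℝ := fun n => Ioc (max (u - 1/(n+1)) (a/2)) (min (u + 1/(n+1)) 1) with hA
    have hanti : Antitone A := by
      intro n m hnm
      have hc : (1:ℝ)/(m+1) ≤ 1/(n+1) := by
        apply one_div_le_one_div_of_le (by positivity)
        exact_mod_cast Nat.succ_le_succ hnm
      exact Ioc_subset_Ioc (max_le_max (by linarith) le_rfl) (min_le_min (by linarith) le_rfl)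
    have hInt : ⋂ n, A n = {u} := by
      apply Subset.antisymm
      · intro r hr
        simp only [mem_iInter, hA, mem_Ioc] at hr
        have h1 : u ≤ r := by
          refine le_of_forall_sub_le fun d hd => ?_
          obtain ⟨n, hn⟩ := exists_nat_one_div_lt hd
          have h2 : u - 1/(n+1) ≤ r := le_of_lt (lt_of_le_of_lt (le_max_left _ _) (hr n).1)
          push_cast at h2 hn ⊢
          linarith
        have h2 : r ≤ u := by
          refine le_of_forall_sub_le fun d hd => ?_
          obtain ⟨n, hn⟩ := exists_nat_one_div_lt hd
          have h2 : r ≤ u + 1/(n+1) := (hr n).2.trans (min_le_left _ _)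
          push_cast at h2 hn ⊢
          linarith
        simp [le_antisymm h2 h1]
      · intro r hr
        simp only [mem_singleton_iff] at hr
        subst hr
        refine mem_iInter.2 fun n => ?_
        simp only [hA, mem_Ioc]
        have hn : (0:ℝ) < 1/((n:ℝ)+1) := by positivity
        have hua : a ≤ r := hu.1
        refine ⟨max_lt (by linarith) (by linarith), le_min (by linarith) hu.2⟩
    have hfin' : μ (A 0) ≠ ⊤ := by
      refine (lt_of_le_of_lt (measure_mono ?_) (finIoc μ hfin (half_pos ha) le_rfl)).ne
      exact Ioc_subset_Ioc (le_max_right _ _) (min_le_right _ _)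
    have htend : Tendsto (μ ∘ A) atTop (nhds 0) := by
      have := tendsto_measure_iInter_atTop
        (fun n => measurableSet_Ioc.nullMeasurableSet) hanti ⟨0, hfin'⟩
      rwa [hInt, measure_singleton] at this
    obtain ⟨n, hn⟩ := (htend.eventually_lt_const
      (by simpa using he : (0:ENNReal) < ENNReal.ofReal e)).exists
    refine ⟨1/(n+1), by positivity, fun t ht hdist => ?_⟩
    have h1 : |t - u| < 1/((n:ℝ)+1) := by simpa [Real.dist_eq] using hdist
    rw [abs_lt] at h1
    have hsub : Ioc (min t u) (max t u) ⊆ A n := by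
      intro r hr
      constructor
      · refine lt_of_le_of_lt (max_le ?_ ?_) hr.1
        · rcases le_total t u with h | h
          · simp only [min_eq_left h]; linarith
          · simp only [min_eq_right h]; linarith
        · calc a/2 ≤ a := by linarith
            _ ≤ min t u := le_min ht.1 hu.1
      · refine hr.2.trans (le_min ?_ ?_)
        · rcases le_total t u with h | h
          · simp only [max_eq_right h]; linarith
          · simp only [max_eq_left h]; linarith
        · exact max_le ht.2 hu.2
    have hle : (μ (Ioc (min t u) (max t u))).toReal < e :=
      ENNReal.toReal_lt_of_lt_ofReal (lt_of_le_of_lt (measure_mono hsub) hn)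
    rw [Real.dist_eq]
    rcases le_total t u with h | h
    · have he1 : (μ (Ioc t u)).toReal = G t - G u := hdiff t u ht.1 h hu.2
      have hnn : 0 ≤ G t - G u := by rw [← he1]; exact ENNReal.toReal_nonneg
      rw [abs_of_nonneg hnn, ← he1]
      simpa [min_eq_left h, max_eq_right h] using hle
    · have he1 : (μ (Ioc u t)).toReal = G u - G t := hdiff u t hu.1 h ht.2
      have hnn : 0 ≤ G u - G t := by rw [← he1]; exact ENNReal.toReal_nonneg
      rw [abs_sub_comm, abs_of_nonneg hnn, ← he1]
      simpa [min_eq_right h, max_eq_left h] using hle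
  -- Heine
  have huc := isCompact_Icc.uniformContinuousOn_of_continuous hcont
  rw [Metric.uniformContinuousOn_iff] at huc
  obtain ⟨δ, hδ, hucd⟩ := huc ε hε
  refine ⟨δ/2, by linarith, fun s t has hst ht hts => ?_⟩
  have hs1 : s ∈ Icc a 1 := ⟨has, hst.trans ht⟩
  have ht1 : t ∈ Icc a 1 := ⟨has.trans hst, ht⟩
  have hd : dist s t < δ := by
    rw [Real.dist_eq, abs_of_nonpos (by linarith)]
    linarith
  have := hucd s hs1 t ht1 hd
  rw [Real.dist_eq] at this
  rw [hdiff s t has hst ht]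
  calc G s - G t ≤ |G s - G t| := le_abs_self _
    _ ≤ ε := this.le

lemma coreConst (μ : Measure ℝ) [NullSingletonClass μ] (hfin : ∀ t : ℝ, 0 < t → μ (Ioc t 1) ≠ ⊤)
    (x : ℝ → ℝ) (hx : ContinuousOn x (Icc 0 1))
    (hint : ∀ s t : ℝ, 0 < s → s ≤ t → t ≤ 1 → x t - x s = ∫ r in Ioc s t, x r ∂μ) :
    ∀ a ∈ Ioc (0:ℝ) 1, x a * Real.exp ((μ (Ioc a 1)).toReal) = x 1 := by
  intro a ha
  obtain ⟨ha0, ha1⟩ := ha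
  set G : ℝ → ℝ := fun t => (μ (Ioc t 1)).toReal with hGdef
  have hG1 : G 1 = 0 := by simp [hGdef]
  have hGnn : ∀ t, 0 ≤ G t := fun t => ENNReal.toReal_nonneg
  obtain ⟨K, hK⟩ := (isCompact_Icc.image_of_continuousOn hx).isBounded.exists_norm_le
  have hKx : ∀ r ∈ Icc (0:ℝ) 1, |x r| ≤ K := fun r hr => hK _ (mem_image_of_mem x hr)
  have hK0 : 0 ≤ K := le_trans (abs_nonneg _) (hKx 0 ⟨le_rfl, zero_le_one⟩)
  have hucx := isCompact_Icc.uniformContinuousOn_of_continuous hx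
  rw [Metric.uniformContinuousOn_iff] at hucx
  have main : ∀ ε : ℝ, 0 < ε →
      |x 1 - x a * Real.exp (G a)| ≤ ε * ((1 + K) * Real.exp (G a) * G a) := by
    intro ε hε
    obtain ⟨δ₁, hδ₁pos, hδ₁⟩ := unifSmall μ hfin ha0 ha1 (lt_min hε one_pos)
    obtain ⟨δ₂, hδ₂pos, hδ₂⟩ := hucx ε hε
    obtain ⟨n, hn⟩ := exists_nat_gt ((1 - a)/(min δ₁ δ₂))
    have hm : 0 < min δ₁ δ₂ := lt_min hδ₁pos hδ₂pos
    set N := n + 1 with hNdef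
    have hNpos : (0:ℝ) < (N:ℝ) := by positivity
    set h : ℝ := (1 - a)/N with hhdef
    have hh0 : 0 ≤ h := by
      apply div_nonneg (by linarith) hNpos.le
    have hh : h < min δ₁ δ₂ := by
      rw [hhdef, div_lt_iff₀ hNpos]
      have h1 : 1 - a < n * min δ₁ δ₂ := (div_lt_iff₀ hm).1 hn
      have h2 : (n:ℝ) ≤ (N:ℝ) := by exact_mod_cast Nat.le_succ n
      nlinarith
    set t : ℕ → ℝ := fun i => a + i * h with htdef
    have hstep : ∀ i : ℕ, t (i+1) - t i = h := by
      intro i; simp only [htdef]; push_cast; ring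
    have htN : t N = 1 := by
      simp only [htdef, hhdef]; field_simp; ring
    have htmono : ∀ i j : ℕ, i ≤ j → t i ≤ t j := by
      intro i j hij
      simp only [htdef]
      have : (i:ℝ) ≤ (j:ℝ) := by exact_mod_cast hij
      nlinarith
    have htmem : ∀ i : ℕ, i ≤ N → t i ∈ Icc a 1 := by
      intro i hi
      refine ⟨by
        simp only [htdef]
        have : (0:ℝ) ≤ (i:ℝ) := Nat.cast_nonneg i
        nlinarith, ?_⟩
      rw [← htN]; exact htmono i N hi
    set y : ℕ → ℝ := fun i => x (t i) * Real.exp (G (t i)) with hydef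
    set c : ℝ := Real.exp (G a) * (ε + K * min ε 1) with hcdef
    have key : ∀ i : ℕ, i < N → |y (i+1) - y i| ≤ c * (G (t i) - G (t (i+1))) := by
      intro i hi
      have hs0 : 0 < t i := lt_of_lt_of_le ha0 (htmem i hi.le).1
      have hsa : a ≤ t i := (htmem i hi.le).1
      have hstt : t i ≤ t (i+1) := htmono i (i+1) (Nat.le_succ i)
      have htt1 : t (i+1) ≤ 1 := (htmem (i+1) hi).2
      set m : ℝ := (μ (Ioc (t i) (t (i+1)))).toReal with hmdef
      have hm0 : 0 ≤ m := ENNReal.toReal_nonneg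
      have hmG : G (t i) = m + G (t (i+1)) := Gadd μ hfin hs0 hstt htt1
      have hmε : m ≤ min ε 1 := by
        apply hδ₁ (t i) (t (i+1)) hsa hstt htt1
        rw [hstep i]; exact (hh.trans_le (min_le_left _ _)).le
      have hInt : x (t (i+1)) - x (t i) = ∫ r in Ioc (t i) (t (i+1)), x r ∂μ :=
        hint (t i) (t (i+1)) hs0 hstt htt1
      have hIntOn : IntegrableOn x (Ioc (t i) (t (i+1))) μ := intgOn μ hfin hx hs0 htt1
      have hconst : IntegrableOn (fun _ => x (t i)) (Ioc (t i) (t (i+1))) μ :=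
        integrableOn_const (finIoc μ hfin hs0 htt1).ne
      set I : ℝ := ∫ r in Ioc (t i) (t (i+1)), (x r - x (t i)) ∂μ with hIdef
      have hsub : Ioc (t i) (t (i+1)) ⊆ Icc 0 1 :=
        fun r hr => ⟨(hs0.trans hr.1).le, hr.2.trans htt1⟩
      have hIeq : I = (x (t (i+1)) - x (t i)) - m * x (t i) := by
        rw [hIdef, integral_sub hIntOn hconst, setIntegral_const, hInt, smul_eq_mul]; rfl
      have hIbnd : |I| ≤ ε * m := by
        have := norm_setIntegral_le_of_norm_le_const (μ := μ) (s := Ioc (t i) (t (i+1)))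
          (f := fun r => x r - x (t i)) (C := ε) (finIoc μ hfin hs0 htt1) ?_
        · rw [Real.norm_eq_abs] at this; exact this
        · intro r hr
          rw [Real.norm_eq_abs, ← Real.dist_eq]
          apply le_of_lt
          apply hδ₂ r (hsub hr) (t i) ⟨hs0.le, hstt.trans htt1⟩
          rw [Real.dist_eq, abs_of_nonneg (by linarith [hr.1.le] : (0:ℝ) ≤ r - t i)]
          have : r ≤ t (i+1) := hr.2
          have h2 := hstep i
          linarith [hh.trans_le (min_le_right δ₁ δ₂)]
      have hexp : |Real.exp m - 1 - m| ≤ m^2 :=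
        Real.abs_exp_sub_one_sub_id_le (by rw [abs_of_nonneg hm0]; exact hmε.trans (min_le_right _ _))
      have hxs : |x (t i)| ≤ K := hKx (t i) ⟨hs0.le, (htmem i hi.le).2⟩
      have hGa : G (t (i+1)) ≤ G a := by
        have := Gadd μ hfin ha0 (hsa.trans hstt) htt1
        have := ENNReal.toReal_nonneg (a := μ (Ioc a (t (i+1))))
        simp only [hGdef] at *; linarith
      have hI2 : x (t (i+1)) - x (t i) * Real.exp m = I - x (t i) * (Real.exp m - 1 - m) := by
        rw [hIeq]; ring
      have heq : y (i+1) - y i = Real.exp (G (t (i+1))) * (I - x (t i) * (Real.exp m - 1 - m)) := by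
        simp only [hydef]
        rw [← hI2, hmG, Real.exp_add]
        ring
      rw [heq, abs_mul, abs_of_pos (Real.exp_pos _)]
      have habs : |I - x (t i) * (Real.exp m - 1 - m)| ≤ ε * m + K * m^2 := by
        calc |I - x (t i) * (Real.exp m - 1 - m)|
            ≤ |I| + |x (t i) * (Real.exp m - 1 - m)| := by
              rw [sub_eq_add_neg]; exact (abs_add_le _ _).trans (by rw [abs_neg])
          _ ≤ ε * m + K * m^2 := add_le_add hIbnd
              (by rw [abs_mul]; exact mul_le_mul hxs hexp (abs_nonneg _) hK0)
      have e1 : Real.exp (G (t (i+1))) ≤ Real.exp (G a) := Real.exp_le_exp.2 hGa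
      have e2 : m^2 ≤ (min ε 1) * m := by nlinarith [mul_le_mul_of_nonneg_right hmε hm0]
      have e3 : ε * m + K * m^2 ≤ (ε + K * min ε 1) * m := by nlinarith [mul_le_mul_of_nonneg_left e2 hK0]
      have e4 : (0:ℝ) ≤ ε * m + K * m^2 := by positivity
      have hcm : c * (G (t i) - G (t (i+1))) = Real.exp (G a) * ((ε + K * min ε 1) * m) := by
        rw [hcdef]; rw [show G (t i) - G (t (i+1)) = m by linarith [hmG]]; ring
      rw [hcm]
      calc Real.exp (G (t (i+1))) * |I - x (t i) * (Real.exp m - 1 - m)|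
          ≤ Real.exp (G (t (i+1))) * (ε * m + K * m^2) :=
            mul_le_mul_of_nonneg_left habs (Real.exp_pos _).le
        _ ≤ Real.exp (G a) * (ε * m + K * m^2) := mul_le_mul_of_nonneg_right e1 e4
        _ ≤ Real.exp (G a) * ((ε + K * min ε 1) * m) :=
            mul_le_mul_of_nonneg_left e3 (Real.exp_pos _).le
    -- sum up
    have tele1 : ∑ i ∈ Finset.range N, (y (i+1) - y i) = y N - y 0 := Finset.sum_range_sub y N
    have tele2 : ∑ i ∈ Finset.range N, (G (t i) - G (t (i+1))) = G (t 0) - G (t N) :=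
      Finset.sum_range_sub' (fun i => G (t i)) N
    have ht0 : t 0 = a := by simp [htdef]
    have hy0 : y 0 = x a * Real.exp (G a) := by rw [hydef]; simp [ht0]
    have hyN : y N = x 1 := by rw [hydef]; simp [htN, hG1]
    have hsum : |x 1 - x a * Real.exp (G a)| ≤ c * G a := by
      rw [← hyN, ← hy0, ← tele1]
      calc |∑ i ∈ Finset.range N, (y (i+1) - y i)|
          ≤ ∑ i ∈ Finset.range N, |y (i+1) - y i| := Finset.abs_sum_le_sum_abs _ _
        _ ≤ ∑ i ∈ Finset.range N, c * (G (t i) - G (t (i+1))) :=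
            Finset.sum_le_sum fun i hi => key i (Finset.mem_range.1 hi)
        _ = c * (G (t 0) - G (t N)) := by rw [← Finset.mul_sum, tele2]
        _ = c * G a := by rw [ht0, htN, hG1]; ring
    refine hsum.trans ?_
    have hc1 : c ≤ ε * (1 + K) * Real.exp (G a) := by
      have h1 : ε + K * min ε 1 ≤ ε * (1 + K) := by nlinarith [min_le_left ε 1]
      rw [hcdef]
      nlinarith [Real.exp_pos (G a)]
    nlinarith [hGnn a, Real.exp_pos (G a), hc1,
      mul_nonneg (mul_nonneg hε.le (by linarith : (0:ℝ) ≤ 1 + K)) (Real.exp_pos (G a)).le]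
  -- conclude
  have hc0 : (0:ℝ) ≤ (1 + K) * Real.exp (G a) * G a :=
    mul_nonneg (mul_nonneg (by linarith) (Real.exp_pos _).le) (hGnn a)
  have hD : |x 1 - x a * Real.exp (G a)| ≤ 0 := by
    refine le_of_forall_pos_le_add fun ε hε => ?_
    set cc := (1 + K) * Real.exp (G a) * G a with hccdef
    have := main (ε / (cc + 1)) (by positivity)
    have hcc : (ε / (cc + 1)) * cc ≤ ε := by
      rw [div_mul_eq_mul_div, div_le_iff₀ (by linarith)]
      nlinarith
    linarith
  have := abs_nonpos_iff.1 hD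
  linarith

-- the difference of two solutions satisfies the integral identity
lemma diff_int {Ω : Type} (μ : Measure ℝ) [NullSingletonClass μ]
    (hfin : ∀ t : ℝ, 0 < t → μ (Ioc t 1) ≠ ⊤) (B X₁ X₂ : ℝ → Ω → ℝ) (ω : Ω)
    (hs₁ : IsSolutionFBMLin μ B X₁ ω) (hs₂ : IsSolutionFBMLin μ B X₂ ω) :
    ∀ s t : ℝ, 0 < s → s ≤ t → t ≤ 1 →
      (X₁ t ω - X₂ t ω) - (X₁ s ω - X₂ s ω) = ∫ r in Ioc s t, (X₁ r ω - X₂ r ω) ∂μ := by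
  set x : ℝ → ℝ := fun u => X₁ u ω - X₂ u ω with hxdef
  have hx : ContinuousOn x (Icc 0 1) := hs₁.1.sub hs₂.1
  have tend : ∀ t ∈ Ioc (0:ℝ) 1,
      Tendsto (fun ε => ∫ r in Ioc ε t, x r ∂μ) (nhdsWithin 0 (Ioi 0)) (nhds (x t)) := by
    intro t ht
    have h1 := hs₁.2.2 t ht
    have h2 := hs₂.2.2 t ht
    have h3 := h1.sub h2
    have heq : ∀ᶠ ε in nhdsWithin (0:ℝ) (Ioi 0),
        (∫ r in Ioc ε t, X₁ r ω ∂μ) - (∫ r in Ioc ε t, X₂ r ω ∂μ)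
          = ∫ r in Ioc ε t, x r ∂μ := by
      filter_upwards [self_mem_nhdsWithin] with ε (hε : ε ∈ Ioi 0)
      rw [← integral_sub (intgOn μ hfin hs₁.1 hε ht.2) (intgOn μ hfin hs₂.1 hε ht.2)]
    have h4 := h3.congr' heq
    have : X₁ t ω - B t ω - (X₂ t ω - B t ω) = x t := by rw [hxdef]; ring
    rwa [this] at h4
  intro s t hs hst ht
  rcases eq_or_lt_of_le hst with rfl | hlt
  · simp
  · set C : ℝ := ∫ r in Ioc s t, x r ∂μ with hCdef
    have heq : ∀ᶠ ε in nhdsWithin (0:ℝ) (Ioi 0),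
        (∫ r in Ioc ε s, x r ∂μ) + C = ∫ r in Ioc ε t, x r ∂μ := by
      have hmem : Ioo (0:ℝ) s ∈ nhdsWithin (0:ℝ) (Ioi 0) :=
        Ioo_mem_nhdsGT_of_mem ⟨le_rfl, hs⟩
      filter_upwards [hmem] with ε hε
      rw [← setIntegral_union ?_ measurableSet_Ioc (intgOn μ hfin hx hε.1 (hst.trans ht))
        (intgOn μ hfin hx hs ht), Ioc_union_Ioc_eq_Ioc (le_of_lt hε.2) hst]
      exact Set.disjoint_left.2 fun r hr hr' => absurd hr'.1 (not_lt.2 hr.2)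
    have h5 : Tendsto (fun ε => (∫ r in Ioc ε s, x r ∂μ) + C)
        (nhdsWithin (0:ℝ) (Ioi 0)) (nhds (x s + C)) :=
      (tend s ⟨hs, hst.trans ht⟩).add_const C
    have h6 := h5.congr' heq
    have := tendsto_nhds_unique h6 (tend t ⟨hs.trans_le hst, ht⟩)
    simp only [hxdef] at this
    linarith

/-- Uniqueness criterion: if `M(t) = exp(μ((t,1]))` does not tend to `+∞` as `t → 0`,
the linear equation driven by `B^H` has at most one solution; if `M(t) → +∞`, any two
solutions differ by `t ↦ C/M(t)` for some random variable `C`. -/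
theorem uniqueness_criterion_fbm_linear_sde
    {Ω : Type} [MeasurableSpace Ω] (P : Measure Ω) [IsProbabilityMeasure P]
    (μ : Measure ℝ) [NullSingletonClass μ]
    (hfin : ∀ t : ℝ, 0 < t → μ (Ioc t 1) ≠ ⊤)
    (B : ℝ → Ω → ℝ)
    (M : ℝ → ℝ) (hM : ∀ t ∈ Ioc (0:ℝ) 1, M t = Real.exp ((μ (Ioc t 1)).toReal))
    (X₁ X₂ : ℝ → Ω → ℝ)
    (h₁ : ∀ᵐ ω ∂P, IsSolutionFBMLin μ B X₁ ω)
    (h₂ : ∀ᵐ ω ∂P, IsSolutionFBMLin μ B X₂ ω) :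
    (¬ Tendsto M (nhdsWithin 0 (Ioi 0)) atTop →
        ∀ᵐ ω ∂P, ∀ t ∈ Icc (0:ℝ) 1, X₁ t ω = X₂ t ω) ∧
    (Tendsto M (nhdsWithin 0 (Ioi 0)) atTop →
        ∃ C : Ω → ℝ, ∀ᵐ ω ∂P, ∀ t ∈ Ioc (0:ℝ) 1, X₁ t ω - X₂ t ω = C ω / M t) := by
  have hae := h₁.and h₂
  have key : ∀ᵐ ω ∂P, ∀ t ∈ Ioc (0:ℝ) 1,
      (X₁ t ω - X₂ t ω) * Real.exp ((μ (Ioc t 1)).toReal) = X₁ 1 ω - X₂ 1 ω := by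
    filter_upwards [hae] with ω hω
    obtain ⟨hs₁, hs₂⟩ := hω
    exact coreConst μ hfin (fun u => X₁ u ω - X₂ u ω) (hs₁.1.sub hs₂.1)
      (diff_int μ hfin B X₁ X₂ ω hs₁ hs₂)
  constructor
  · intro hnot
    rw [tendsto_atTop] at hnot
    push_neg at hnot
    obtain ⟨b, hb⟩ := hnot
    have hbub : ∀ t ∈ Ioc (0:ℝ) 1, Real.exp ((μ (Ioc t 1)).toReal) < b := by
      intro t ht
      obtain ⟨s, hs, hMs⟩ := frequently_iff.1 hb
        (Ioo_mem_nhdsGT_of_mem (⟨le_rfl, ht.1⟩ : (0:ℝ) ∈ Ico 0 t))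
      have hsIoc : s ∈ Ioc (0:ℝ) 1 := ⟨hs.1, le_of_lt (lt_of_lt_of_le hs.2 ht.2)⟩
      rw [hM s hsIoc] at hMs
      refine lt_of_le_of_lt ?_ hMs
      apply Real.exp_le_exp.2
      have := Gadd μ hfin hs.1 (le_of_lt hs.2) ht.2
      linarith [ENNReal.toReal_nonneg (a := μ (Ioc s t))]
    have hb0 : (0:ℝ) < b := (Real.exp_pos _).trans (hbub 1 ⟨one_pos, le_rfl⟩)
    filter_upwards [key, hae] with ω hkey hω
    obtain ⟨hs₁, hs₂⟩ := hω
    set x : ℝ → ℝ := fun u => X₁ u ω - X₂ u ω with hxdef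
    have hx0 : x 0 = 0 := by simp [hxdef, hs₁.2.1, hs₂.2.1]
    have hxc : ContinuousOn x (Icc 0 1) := hs₁.1.sub hs₂.1
    have hmemIcc : Icc (0:ℝ) 1 ∈ nhdsWithin (0:ℝ) (Ioi 0) :=
      mem_nhdsWithin.2 ⟨Iio 1, isOpen_Iio, by norm_num,
        fun r hr => ⟨le_of_lt hr.2, le_of_lt hr.1⟩⟩
    have hmemIoc : Ioc (0:ℝ) 1 ∈ nhdsWithin (0:ℝ) (Ioi 0) :=
      mem_nhdsWithin.2 ⟨Iio 1, isOpen_Iio, by norm_num,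
        fun r hr => ⟨hr.2, le_of_lt hr.1⟩⟩
    have hle : nhdsWithin (0:ℝ) (Ioi 0) ≤ nhdsWithin (0:ℝ) (Icc 0 1) :=
      nhdsWithin_le_iff.2 hmemIcc
    have htendx : Tendsto x (nhdsWithin (0:ℝ) (Ioi 0)) (nhds 0) := by
      have h := hxc 0 ⟨le_rfl, zero_le_one⟩
      have h2 : Tendsto x (nhdsWithin (0:ℝ) (Icc 0 1)) (nhds (x 0)) := h
      rw [hx0] at h2
      exact h2.mono_left hle
    have hC : x 1 = 0 := by
      have hCb : ∀ ε : ℝ, 0 < ε → |x 1| ≤ ε := by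
        intro ε hε
        have hball : Metric.ball (0:ℝ) (ε/b) ∈ nhds (0:ℝ) :=
          Metric.ball_mem_nhds 0 (by positivity)
        have hev : ∀ᶠ t in nhdsWithin (0:ℝ) (Ioi 0), |x t| < ε/b := by
          filter_upwards [htendx hball] with t ht
          simpa [Real.dist_eq] using ht
        obtain ⟨t, ht1, ht2⟩ := (hev.and (eventually_of_mem hmemIoc fun t ht => ht)).exists
        have h3 := hkey t ht2
        calc |x 1| = |x t| * Real.exp ((μ (Ioc t 1)).toReal) := by
              have h3' : x t * Real.exp ((μ (Ioc t 1)).toReal) = x 1 := h3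
              rw [← h3', abs_mul, abs_of_pos (Real.exp_pos _)]
          _ ≤ (ε/b) * b :=
              mul_le_mul ht1.le (hbub t ht2).le (Real.exp_pos _).le (by positivity)
          _ = ε := by field_simp
      have h4 : |x 1| ≤ 0 := le_of_forall_pos_le_add fun ε hε => by linarith [hCb ε hε]
      exact abs_nonpos_iff.1 h4
    intro t ht
    rcases eq_or_lt_of_le ht.1 with heq | htpos
    · rw [← heq, hs₁.2.1, hs₂.2.1]
    · have h2 := hkey t ⟨htpos, ht.2⟩
      have h3 : x t * Real.exp ((μ (Ioc t 1)).toReal) = 0 := by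
        have h2' : x t * Real.exp ((μ (Ioc t 1)).toReal) = x 1 := h2
        rw [h2', hC]
      rcases mul_eq_zero.1 h3 with h4 | h4
      · exact sub_eq_zero.1 h4
      · exact absurd h4 (Real.exp_ne_zero _)
  · intro _
    refine ⟨fun ω => X₁ 1 ω - X₂ 1 ω, ?_⟩
    filter_upwards [key] with ω hkey
    intro t ht
    rw [hM t ht, eq_div_iff (Real.exp_ne_zero _)]
    exact hkey t ht
end

section
/- Let B^H be a fractional Brownian motion with Hurst parameter H ∈ (1/2,1) and let β_t = −∫_{1/t}^∞ u^{−2H} dB^H_u for t > 0, β_0 = 0 (the integral being a Wiener integral with respect to B^H). Then (β_t)_{t≥0} is a fractional Brownian motion with Hurst parameter H. -/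
open MeasureTheory ProbabilityTheory Real Set

/-- A fractional Brownian motion in law (finite-dimensional distributions) with Hurst
parameter `H` on the time set `S`: a centered Gaussian family starting at `0` with
covariance `R_H(s,t) = (1/2)(t^{2H} + s^{2H} - |t-s|^{2H})`. -/
def IsFBMLawOn {Ω : Type} [MeasurableSpace Ω] (P : Measure Ω)
    (H : ℝ) (S : Set ℝ) (B : ℝ → Ω → ℝ) : Prop :=
  (∀ (n : ℕ) (t : Fin n → ℝ), (∀ i, t i ∈ S) → ∀ c : Fin n → ℝ,
      ∃ v : NNReal, Measure.map (fun ω => ∑ i, c i * B (t i) ω) P = gaussianReal 0 v) ∧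
  (∀ ω, B 0 ω = 0) ∧
  (∀ s ∈ S, ∀ t ∈ S,
      ∫ ω, B s ω * B t ω ∂P
        = (1/2) * (|t| ^ (2*H) + |s| ^ (2*H) - |t - s| ^ (2*H)))

section TimeInversionAux
open intervalIntegral


section Aux
variable {e : ℝ}

lemma aux_ii_abs_rpow (he : -1 < e) (a b : ℝ) :
    IntervalIntegrable (fun x : ℝ => |x| ^ e) volume a b := by
  have h : ∀ c : ℝ, 0 ≤ c → IntervalIntegrable (fun x : ℝ => |x| ^ e) volume 0 c := by
    intro c hc
    have h0 : IntervalIntegrable (fun x : ℝ => x ^ e) volume 0 c :=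
      intervalIntegrable_rpow' he
    rw [intervalIntegrable_iff] at h0 ⊢
    refine h0.congr_fun ?_ measurableSet_uIoc
    intro x hx
    rw [uIoc_of_le hc] at hx
    show (x : ℝ) ^ e = |x| ^ e
    rw [abs_of_pos hx.1]
  have key : ∀ c : ℝ, IntervalIntegrable (fun x : ℝ => |x| ^ e) volume 0 c := by
    intro c
    rcases le_total 0 c with hc | hc
    · exact h c hc
    · rw [IntervalIntegrable.iff_comp_neg]
      simpa using h (-c) (by linarith)
  exact (key a).symm.trans (key b)

lemma aux_ii_q (he : -1 < e) (a b : ℝ) :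
    IntervalIntegrable (fun x : ℝ => x * |x| ^ e) volume a b := by
  refine (aux_ii_abs_rpow (by linarith : (-1:ℝ) < e + 1) a b).mono_fun ?_ ?_
  · exact ((by fun_prop : Measurable (fun x : ℝ => x * |x| ^ e))).aestronglyMeasurable
  · refine Filter.Eventually.of_forall fun x => ?_
    show ‖x * |x| ^ e‖ ≤ ‖|x| ^ (e + 1)‖
    rcases eq_or_ne x 0 with rfl | hx
    · simp
    · rw [Real.norm_eq_abs, Real.norm_eq_abs, abs_mul, abs_of_nonneg (rpow_nonneg (abs_nonneg x) e),
        abs_of_nonneg (rpow_nonneg (abs_nonneg x) (e+1)), rpow_add_one (abs_ne_zero.2 hx), mul_comm]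

lemma aux_ii_abs_rpow_c (he : -1 < e) (a b c : ℝ) :
    IntervalIntegrable (fun x : ℝ => |x - c| ^ e) volume a b := by
  simpa using (aux_ii_abs_rpow he (a - c) (b - c)).comp_sub_right c

lemma aux_ii_q_c (he : -1 < e) (a b c : ℝ) :
    IntervalIntegrable (fun x : ℝ => (x - c) * |x - c| ^ e) volume a b := by
  simpa using (aux_ii_q he (a - c) (b - c)).comp_sub_right c

end Aux

section Vals
variable {e : ℝ}

lemma aux_int_abs0 (he : -1 < e) {b : ℝ} (hb : 0 ≤ b) :
    ∫ x in (0:ℝ)..b, |x| ^ e = b * |b| ^ e / (e + 1) := by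
  have h1 : ∫ x in (0:ℝ)..b, |x| ^ e = ∫ x in (0:ℝ)..b, x ^ e := by
    refine integral_congr fun x hx => ?_
    rw [uIcc_of_le hb] at hx
    show |x| ^ e = x ^ e
    rw [abs_of_nonneg hx.1]
  rw [h1, integral_rpow (Or.inl he), Real.zero_rpow (by linarith : e + 1 ≠ 0)]
  rcases eq_or_lt_of_le hb with rfl | hb'
  · simp [Real.zero_rpow (show e + 1 ≠ 0 by linarith)]
  · rw [abs_of_pos hb', rpow_add_one (ne_of_gt hb'), mul_comm]
    ring

lemma aux_int_abs0' (he : -1 < e) (b : ℝ) :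
    ∫ x in (0:ℝ)..b, |x| ^ e = b * |b| ^ e / (e + 1) := by
  rcases le_or_gt 0 b with hb | hb
  · exact aux_int_abs0 he hb
  · have h1 : ∫ x in (0:ℝ)..b, |x| ^ e = ∫ x in (0:ℝ)..b, |(-x)| ^ e := by
      simp [abs_neg]
    rw [h1, integral_comp_neg (fun x : ℝ => |x| ^ e), neg_zero,
      integral_symm (0 : ℝ) (-b), aux_int_abs0 he (by linarith : (0:ℝ) ≤ -b), abs_neg]
    ring

lemma aux_int_q0 (he : -1 < e) {b : ℝ} (hb : 0 ≤ b) :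
    ∫ x in (0:ℝ)..b, x * |x| ^ e = |b| ^ (e + 2) / (e + 2) := by
  have h1 : ∫ x in (0:ℝ)..b, x * |x| ^ e = ∫ x in (0:ℝ)..b, x ^ (e + 1) := by
    refine integral_congr fun x hx => ?_
    rw [uIcc_of_le hb] at hx
    show x * |x| ^ e = x ^ (e + 1)
    rcases eq_or_lt_of_le hx.1 with rfl | hx'
    · rw [Real.zero_rpow (by linarith : e + 1 ≠ 0)]; simp
    · rw [abs_of_pos hx', rpow_add_one (ne_of_gt hx'), mul_comm]
  rw [h1, integral_rpow (Or.inl (by linarith : (-1:ℝ) < e + 1)),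
    Real.zero_rpow (by linarith : e + 1 + 1 ≠ 0), abs_of_nonneg hb]
  ring_nf

lemma aux_int_q0' (he : -1 < e) (b : ℝ) :
    ∫ x in (0:ℝ)..b, x * |x| ^ e = |b| ^ (e + 2) / (e + 2) := by
  have key : ∀ b : ℝ, 0 ≤ b → ∫ x in (0:ℝ)..b, x * |x| ^ e = |b| ^ (e + 2) / (e + 2) :=
    fun b hb => aux_int_q0 he hb
  rcases le_or_gt 0 b with hb | hb
  · exact key b hb
  · have h1 : ∫ x in (0:ℝ)..b, x * |x| ^ e = ∫ x in (0:ℝ)..b, -((-x) * |(-x)| ^ e) := by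
      simp [abs_neg]
    rw [h1, intervalIntegral.integral_neg, integral_comp_neg (fun x : ℝ => x * |x| ^ e), neg_zero,
      integral_symm (0 : ℝ) (-b), key (-b) (by linarith), abs_neg]
    ring

lemma aux_int_abs (he : -1 < e) (a b c : ℝ) :
    ∫ x in a..b, |x - c| ^ e
      = ((b - c) * |b - c| ^ e - (a - c) * |a - c| ^ e) / (e + 1) := by
  rw [integral_comp_sub_right (fun y : ℝ => |y| ^ e) c,
    ← integral_add_adjacent_intervals (aux_ii_abs_rpow he (a - c) 0)
      (aux_ii_abs_rpow he 0 (b - c)),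
    integral_symm (0 : ℝ) (a - c), aux_int_abs0' he (a - c), aux_int_abs0' he (b - c)]
  ring

lemma aux_int_q (he : -1 < e) (a b c : ℝ) :
    ∫ x in a..b, (x - c) * |x - c| ^ e
      = (|b - c| ^ (e + 2) - |a - c| ^ (e + 2)) / (e + 2) := by
  rw [integral_comp_sub_right (fun y : ℝ => y * |y| ^ e) c,
    ← integral_add_adjacent_intervals (aux_ii_q he (a - c) 0) (aux_ii_q he 0 (b - c)),
    integral_symm (0 : ℝ) (a - c), aux_int_q0' he (a - c), aux_int_q0' he (b - c)]
  ring

end Vals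

section Sub

lemma aux_sub {a : ℝ} (ha : 0 < a) (g φ : ℝ → ℝ)
    (hφ : ∀ x, a < x → φ x = x ^ (-2 : ℝ) * g x⁻¹)
    (hg : IntegrableOn g (Ioo 0 a⁻¹)) :
    IntegrableOn φ (Ioi a) ∧ ∫ x in Ioi a, φ x = ∫ y in Ioo 0 a⁻¹, g y := by
  set f : ℝ → ℝ := (Ioo (0:ℝ) a⁻¹).indicator g with hf_def
  have hf : IntegrableOn f (Ioi 0) :=
    ((integrable_indicator_iff measurableSet_Ioo).2 hg).integrableOn
  have hmem_iff : ∀ x : ℝ, 0 < x → (x⁻¹ ∈ Ioo (0:ℝ) a⁻¹ ↔ a < x) := by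
    intro x hx
    constructor
    · rintro ⟨-, h2⟩
      rwa [inv_lt_inv₀ hx ha] at h2
    · intro h
      exact ⟨inv_pos.2 hx, (inv_lt_inv₀ hx ha).2 h⟩
  have hEq : EqOn (fun x : ℝ => (|(-1:ℝ)| * x ^ ((-1:ℝ) - 1)) • f (x ^ (-1:ℝ)))
      ((Ioi a).indicator φ) (Ioi 0) := by
    intro x hx
    have hx0 : (0:ℝ) < x := hx
    have h1 : ((-1:ℝ) - 1) = (-2:ℝ) := by norm_num
    simp only [smul_eq_mul, abs_neg, abs_one, one_mul, h1, Real.rpow_neg_one]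
    rcases lt_or_ge a x with h | h
    · rw [hf_def, Set.indicator_of_mem ((hmem_iff x hx0).2 h) g,
        Set.indicator_of_mem (mem_Ioi.2 h) φ, hφ x h]
    · rw [hf_def, Set.indicator_of_notMem (fun hc => absurd ((hmem_iff x hx0).1 hc) (not_lt.2 h)),
        Set.indicator_of_notMem (fun hc => absurd (mem_Ioi.1 hc) (not_lt.2 h)), mul_zero]
  have hIoi : Ioi (0:ℝ) ∩ Ioi a = Ioi a := by
    rw [Set.Ioi_inter_Ioi, max_eq_right ha.le]
  have hIoo : Ioi (0:ℝ) ∩ Ioo 0 a⁻¹ = Ioo 0 a⁻¹ := by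
    rw [Set.inter_eq_right]
    exact fun y hy => hy.1
  constructor
  · have h1 : IntegrableOn ((Ioi a).indicator φ) (Ioi 0) :=
      (((integrableOn_Ioi_comp_rpow_iff f (p := -1) (by norm_num)).2 hf).congr_fun hEq
        measurableSet_Ioi)
    have h2 : Integrable ((Ioi (0:ℝ)).indicator ((Ioi a).indicator φ)) volume :=
      (integrable_indicator_iff measurableSet_Ioi).2 h1
    rw [Set.indicator_indicator, hIoi] at h2
    exact (integrable_indicator_iff measurableSet_Ioi).1 h2
  · have h2 := integral_comp_rpow_Ioi f (p := (-1:ℝ)) (by norm_num)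
    rw [setIntegral_congr_fun measurableSet_Ioi hEq, setIntegral_indicator measurableSet_Ioi,
      hf_def, setIntegral_indicator measurableSet_Ioo, hIoi, hIoo] at h2
    exact h2

end Sub

section Steps
variable {H : ℝ}

lemma inner_step (h1 : 1/2 < H) (h2 : H < 1) {t w : ℝ} (ht : 0 < t) (hw : 0 < w) :
    Integrable (fun v : ℝ => (if 1/t ≤ v then v ^ (-(2*H)) else 0) *
        (H * (2*H - 1) * |w - v| ^ (2*H - 2))) volume ∧
    ∫ v : ℝ, (if 1/t ≤ v then v ^ (-(2*H)) else 0) * (H * (2*H - 1) * |w - v| ^ (2*H - 2))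
      = H * w ^ (2*H - 2) * ((t - w⁻¹) * |t - w⁻¹| ^ (2*H - 2) + w⁻¹ ^ (2*H - 1)) := by
  set e : ℝ := 2*H - 2 with he_def
  set K : ℝ := H * (2*H - 1) with hK_def
  have he : (-1:ℝ) < e := by rw [he_def]; linarith
  have he0 : e < 0 := by rw [he_def]; linarith
  have he1 : (0:ℝ) < e + 1 := by rw [he_def]; linarith
  set c : ℝ := w⁻¹ with hc_def
  have hc : 0 < c := inv_pos.2 hw
  set g : ℝ → ℝ := fun y => K * w ^ e * |y - c| ^ e with hg_def
  set φ : ℝ → ℝ := fun v => v ^ (-(2*H)) * (K * |w - v| ^ e) with hφ_def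
  have ha : (0:ℝ) < 1/t := one_div_pos.2 ht
  have hainv : (1/t)⁻¹ = t := by rw [one_div, inv_inv]
  have hφ : ∀ v, 1/t < v → φ v = v ^ (-2 : ℝ) * g v⁻¹ := by
    intro v hv
    have hv0 : (0:ℝ) < v := lt_trans ha hv
    have h₁ : v⁻¹ - c = (w - v) * (v⁻¹ * w⁻¹) := by
      rw [hc_def]; field_simp
    have hvw : (0:ℝ) < v⁻¹ * w⁻¹ := mul_pos (inv_pos.2 hv0) (inv_pos.2 hw)
    have h₂ : (v⁻¹ * w⁻¹) ^ e = v ^ (-e) * w ^ (-e) := by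
      rw [Real.mul_rpow (inv_pos.2 hv0).le (inv_pos.2 hw).le, Real.inv_rpow hv0.le,
        Real.inv_rpow hw.le, ← Real.rpow_neg hv0.le, ← Real.rpow_neg hw.le]
    have h₃ : w ^ e * w ^ (-e) = 1 := by
      rw [← Real.rpow_add hw]; simp
    have h₄ : v ^ (-(2:ℝ)) * v ^ (-e) = v ^ (-(2*H)) := by
      rw [← Real.rpow_add hv0]
      congr 1
      rw [he_def]; ring
    show v ^ (-(2*H)) * (K * |w - v| ^ e) = v ^ (-2 : ℝ) * (K * w ^ e * |v⁻¹ - c| ^ e)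
    rw [h₁, abs_mul, abs_of_pos hvw, Real.mul_rpow (abs_nonneg _) hvw.le, h₂]
    calc v ^ (-(2*H)) * (K * |w - v| ^ e)
        = (v ^ (-(2:ℝ)) * v ^ (-e)) * (K * |w - v| ^ e) := by rw [h₄]
      _ = (v ^ (-(2:ℝ)) * v ^ (-e)) * (w ^ e * w ^ (-e)) * (K * |w - v| ^ e) := by
          rw [h₃, mul_one]
      _ = v ^ (-2:ℝ) * (K * w ^ e * (|w - v| ^ e * (v ^ (-e) * w ^ (-e)))) := by ring
  have hg : IntegrableOn g (Ioo 0 ((1/t)⁻¹)) := by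
    rw [hainv]
    have hii : IntegrableOn (fun y : ℝ => |y - c| ^ e) (Ioo 0 t) := by
      rw [← intervalIntegrable_iff_integrableOn_Ioo_of_le ht.le]
      exact aux_ii_abs_rpow_c he 0 t c
    exact hii.const_mul (K * w ^ e)
  obtain ⟨hint, heq⟩ := aux_sub ha g φ hφ hg
  have hFind : (fun v : ℝ => (if 1/t ≤ v then v ^ (-(2*H)) else 0) * (K * |w - v| ^ e))
      = (Ici (1/t)).indicator φ := by
    funext v
    by_cases h : 1/t ≤ v
    · rw [if_pos h, Set.indicator_of_mem (mem_Ici.2 h)]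
    · rw [if_neg h, Set.indicator_of_notMem (fun hc' => h (mem_Ici.1 hc')), zero_mul]
  constructor
  · rw [hFind, integrable_indicator_iff measurableSet_Ici,
      integrableOn_Ici_iff_integrableOn_Ioi]
    exact hint
  · rw [hFind, MeasureTheory.integral_indicator measurableSet_Ici, integral_Ici_eq_integral_Ioi, heq, hainv]
    have hIoo : ∫ y in Ioo (0:ℝ) t, g y = K * w ^ e * ∫ y in Ioo (0:ℝ) t, |y - c| ^ e :=
      MeasureTheory.integral_const_mul _ _
    rw [hIoo, ← integral_Ioc_eq_integral_Ioo, ← intervalIntegral.integral_of_le ht.le,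
      aux_int_abs he 0 t c]
    have h0c : (0 - c) * |0 - c| ^ e = -(c ^ (e + 1)) := by
      rw [zero_sub, abs_neg, abs_of_pos hc, Real.rpow_add_one hc.ne']
      ring
    rw [h0c]
    have hKe : K = H * (e + 1) := by rw [hK_def, he_def]; ring
    have hex : c ^ (e + 1) = c ^ (2*H - 1) := by rw [he_def]; ring_nf
    rw [hKe]
    field_simp
    rw [show H * 2 - 1 = e + 1 by rw [he_def]; ring]
    ring

lemma outer_step (h1 : 1/2 < H) (h2 : H < 1) {s t : ℝ} (hs : 0 < s) (ht : 0 < t) :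
    Integrable (fun u : ℝ => (if 1/s ≤ u then u ^ (-(2*H)) else 0) *
        (H * u ^ (2*H - 2) * ((t - u⁻¹) * |t - u⁻¹| ^ (2*H - 2) + u⁻¹ ^ (2*H - 1)))) volume ∧
    ∫ u : ℝ, (if 1/s ≤ u then u ^ (-(2*H)) else 0) *
        (H * u ^ (2*H - 2) * ((t - u⁻¹) * |t - u⁻¹| ^ (2*H - 2) + u⁻¹ ^ (2*H - 1)))
      = (t ^ (2*H) + s ^ (2*H) - |s - t| ^ (2*H)) / 2 := by
  set e : ℝ := 2*H - 2 with he_def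
  have he : (-1:ℝ) < e := by rw [he_def]; linarith
  have he1 : (0:ℝ) < e + 1 := by rw [he_def]; linarith
  have he2 : e + 2 = 2*H := by rw [he_def]; ring
  have hee : e + 1 = 2*H - 1 := by rw [he_def]; ring
  have hH0 : (0:ℝ) < H := by linarith
  set g : ℝ → ℝ := fun x => H * ((t - x) * |t - x| ^ e + x ^ (e+1)) with hg_def
  set φ : ℝ → ℝ := fun u => u ^ (-(2*H)) *
      (H * u ^ e * ((t - u⁻¹) * |t - u⁻¹| ^ e + u⁻¹ ^ (e+1))) with hφ_def
  have ha : (0:ℝ) < 1/s := one_div_pos.2 hs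
  have hainv : (1/s)⁻¹ = s := by rw [one_div, inv_inv]
  have hφ : ∀ u, 1/s < u → φ u = u ^ (-2 : ℝ) * g u⁻¹ := by
    intro u hu
    have hu0 : (0:ℝ) < u := lt_trans ha hu
    have h₄ : u ^ (-(2*H)) * u ^ e = u ^ (-(2:ℝ)) := by
      rw [← Real.rpow_add hu0]
      congr 1
      rw [he_def]; ring
    show u ^ (-(2*H)) * (H * u ^ e * ((t - u⁻¹) * |t - u⁻¹| ^ e + u⁻¹ ^ (e+1)))
        = u ^ (-2 : ℝ) * (H * ((t - u⁻¹) * |t - u⁻¹| ^ e + u⁻¹ ^ (e+1)))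
    calc u ^ (-(2*H)) * (H * u ^ e * ((t - u⁻¹) * |t - u⁻¹| ^ e + u⁻¹ ^ (e+1)))
        = (u ^ (-(2*H)) * u ^ e) * (H * ((t - u⁻¹) * |t - u⁻¹| ^ e + u⁻¹ ^ (e+1))) := by ring
      _ = u ^ (-2 : ℝ) * (H * ((t - u⁻¹) * |t - u⁻¹| ^ e + u⁻¹ ^ (e+1))) := by rw [h₄]
  have hq : (fun x : ℝ => (t - x) * |t - x| ^ e) = fun x => -((x - t) * |x - t| ^ e) := by
    funext x
    rw [abs_sub_comm t x]
    ring
  have hii1 : IntervalIntegrable (fun x : ℝ => (t - x) * |t - x| ^ e) volume 0 s := by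
    rw [hq]
    exact (aux_ii_q_c he 0 s t).neg
  have hii2 : IntervalIntegrable (fun x : ℝ => x ^ (e+1)) volume 0 s :=
    intervalIntegrable_rpow' (by linarith)
  have hg : IntegrableOn g (Ioo 0 ((1/s)⁻¹)) := by
    rw [hainv]
    have hii : IntegrableOn (fun x : ℝ => (t - x) * |t - x| ^ e + x ^ (e+1)) (Ioo 0 s) := by
      rw [← intervalIntegrable_iff_integrableOn_Ioo_of_le hs.le]
      exact hii1.add hii2
    exact hii.const_mul H
  obtain ⟨hint, heq⟩ := aux_sub ha g φ hφ hg
  have hFind : (fun u : ℝ => (if 1/s ≤ u then u ^ (-(2*H)) else 0) *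
      (H * u ^ e * ((t - u⁻¹) * |t - u⁻¹| ^ e + u⁻¹ ^ (e+1))))
      = (Ici (1/s)).indicator φ := by
    funext u
    by_cases h : 1/s ≤ u
    · rw [if_pos h, Set.indicator_of_mem (mem_Ici.2 h)]
    · rw [if_neg h, Set.indicator_of_notMem (fun hc' => h (mem_Ici.1 hc')), zero_mul]
  have hmain : ∫ u : ℝ, (if 1/s ≤ u then u ^ (-(2*H)) else 0) *
        (H * u ^ e * ((t - u⁻¹) * |t - u⁻¹| ^ e + u⁻¹ ^ (e+1)))
      = (t ^ (2*H) + s ^ (2*H) - |s - t| ^ (2*H)) / 2 := by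
    rw [hFind, MeasureTheory.integral_indicator measurableSet_Ici,
      integral_Ici_eq_integral_Ioi, heq, hainv]
    have hIoo : ∫ y in Ioo (0:ℝ) s, g y
        = H * ∫ y in Ioo (0:ℝ) s, ((t - y) * |t - y| ^ e + y ^ (e+1)) :=
      MeasureTheory.integral_const_mul _ _
    rw [hIoo, ← integral_Ioc_eq_integral_Ioo, ← intervalIntegral.integral_of_le hs.le,
      intervalIntegral.integral_add hii1 hii2]
    have hA : ∫ x in (0:ℝ)..s, (t - x) * |t - x| ^ e
        = (t ^ (2*H) - |s - t| ^ (2*H)) / (2*H) := by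
      rw [hq, intervalIntegral.integral_neg, aux_int_q he 0 s t, he2, zero_sub, abs_neg,
        abs_of_pos ht]
      ring
    have hB : ∫ x in (0:ℝ)..s, x ^ (e+1) = s ^ (2*H) / (2*H) := by
      rw [integral_rpow (Or.inl (by linarith : (-1:ℝ) < e + 1)),
        Real.zero_rpow (by linarith : e + 1 + 1 ≠ 0), show e + 1 + 1 = 2*H by rw [he_def]; ring]
      ring
    rw [hA, hB]
    field_simp
    ring
  rw [hee] at hFind hmain
  constructor
  · rw [hFind, integrable_indicator_iff measurableSet_Ici,
      integrableOn_Ici_iff_integrableOn_Ioi]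
    exact hint
  · exact hmain

end Steps

open ProbabilityTheory in
theorem time_inversion_fbm_aux
    {Ω : Type} [MeasurableSpace Ω] (P : Measure Ω) [IsProbabilityMeasure P]
    (H : ℝ) (hH : H ∈ Set.Ioo (1/2 : ℝ) 1)
    (W : (ℝ → ℝ) → Ω → ℝ)
    (hGauss : ∀ (n : ℕ) (f : Fin n → (ℝ → ℝ)) (c : Fin n → ℝ),
      ∃ v : NNReal, Measure.map (fun ω => ∑ i, c i * W (f i) ω) P = gaussianReal 0 v)
    (hCov : ∀ f g : ℝ → ℝ,
      Integrable (fun p : ℝ × ℝ =>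
        f p.1 * g p.2 * (H * (2*H - 1) * |p.1 - p.2| ^ (2*H - 2))) →
      ∫ ω, W f ω * W g ω ∂P
        = ∫ p : ℝ × ℝ,
            f p.1 * g p.2 * (H * (2*H - 1) * |p.1 - p.2| ^ (2*H - 2)))
    (β : ℝ → Ω → ℝ) (hβ0 : ∀ ω, β 0 ω = 0)
    (hβ : ∀ t : ℝ, 0 < t → ∀ ω,
      β t ω = - W (fun u => if 1/t ≤ u then u ^ (-(2*H)) else 0) ω) :
    (∀ (n : ℕ) (t : Fin n → ℝ), (∀ i, t i ∈ Ici (0:ℝ)) → ∀ c : Fin n → ℝ,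
      ∃ v : NNReal, Measure.map (fun ω => ∑ i, c i * β (t i) ω) P = gaussianReal 0 v) ∧
    (∀ ω, β 0 ω = 0) ∧
    (∀ s ∈ Ici (0:ℝ), ∀ t ∈ Ici (0:ℝ),
      ∫ ω, β s ω * β t ω ∂P
        = (1/2) * (|t| ^ (2*H) + |s| ^ (2*H) - |t - s| ^ (2*H))) := by
  obtain ⟨h1, h2⟩ := hH
  have hH0 : (0:ℝ) < H := by linarith
  refine ⟨?_, hβ0, ?_⟩
  · -- Gaussian finite-dimensional marginals
    intro n t ht c
    classical
    set f' : Fin n → (ℝ → ℝ) := fun i =>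
      if 0 < t i then (fun u => if 1/(t i) ≤ u then u ^ (-(2*H)) else 0) else (fun _ => 0)
      with hf'
    set c' : Fin n → ℝ := fun i => if 0 < t i then -c i else 0 with hc'
    obtain ⟨v, hv⟩ := hGauss n f' c'
    refine ⟨v, ?_⟩
    have hfun : (fun ω => ∑ i, c i * β (t i) ω) = (fun ω => ∑ i, c' i * W (f' i) ω) := by
      funext ω
      refine Finset.sum_congr rfl fun i _ => ?_
      by_cases h : 0 < t i
      · simp only [hf', hc', if_pos h]
        rw [hβ (t i) h ω]
        ring
      · have h0 : t i = 0 := le_antisymm (not_lt.1 h) (ht i)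
        simp only [hf', hc', if_neg h, h0, hβ0, mul_zero, zero_mul]
    rw [hfun]
    exact hv
  · -- covariance
    intro s hs t ht
    rcases eq_or_lt_of_le (mem_Ici.1 hs) with rfl | hs0
    · simp only [hβ0, zero_mul, integral_zero]
      rw [abs_zero, Real.zero_rpow (by linarith : 2*H ≠ 0), sub_zero]
      ring
    rcases eq_or_lt_of_le (mem_Ici.1 ht) with rfl | ht0
    · simp only [hβ0, mul_zero, zero_mul, integral_zero]
      rw [abs_zero, Real.zero_rpow (by linarith : 2*H ≠ 0), zero_sub, abs_neg]
      ring
    -- main case : s, t > 0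
    set fs : ℝ → ℝ := fun u => if 1/s ≤ u then u ^ (-(2*H)) else 0 with hfs
    set ft : ℝ → ℝ := fun u => if 1/t ≤ u then u ^ (-(2*H)) else 0 with hft
    set F : ℝ × ℝ → ℝ := fun p =>
      fs p.1 * ft p.2 * (H * (2*H - 1) * |p.1 - p.2| ^ (2*H - 2)) with hF
    have hnn : ∀ x y : ℝ, 0 ≤ F (x, y) := by
      intro x y
      refine mul_nonneg (mul_nonneg ?_ ?_) ?_
      · simp only [hfs]
        split_ifs with h
        · have hx0 : (0:ℝ) < x := lt_of_lt_of_le (one_div_pos.2 hs0) h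
          exact Real.rpow_nonneg hx0.le _
        · exact le_refl 0
      · simp only [hft]
        split_ifs with h
        · have hy0 : (0:ℝ) < y := lt_of_lt_of_le (one_div_pos.2 ht0) h
          exact Real.rpow_nonneg hy0.le _
        · exact le_refl 0
      · have : (0:ℝ) < H * (2*H - 1) := by nlinarith
        exact mul_nonneg this.le (Real.rpow_nonneg (abs_nonneg _) _)
    have hmeas : AEStronglyMeasurable F ((volume : Measure ℝ).prod volume) := by
      refine Measurable.aestronglyMeasurable ?_
      simp only [hF, hfs, hft]
      apply Measurable.mul
      apply Measurable.mul
      · exact (Measurable.ite (measurableSet_le measurable_const measurable_fst)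
          (by fun_prop) measurable_const)
      · exact (Measurable.ite (measurableSet_le measurable_const measurable_snd)
          (by fun_prop) measurable_const)
      · fun_prop
    have cond1 : ∀ x : ℝ, Integrable (fun y => F (x, y)) volume := by
      intro x
      by_cases h : 1/s ≤ x
      · have hx0 : (0:ℝ) < x := lt_of_lt_of_le (one_div_pos.2 hs0) h
        have := ((inner_step h1 h2 ht0 hx0).1).const_mul (fs x)
        simpa only [hF, ← mul_assoc] using this
      · have hz : (fun y => F (x, y)) = fun _ => (0:ℝ) := by
          funext y
          simp only [hF, hfs, if_neg h, zero_mul]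
        rw [hz]
        exact integrable_zero _ _ _
    have inner_eval : ∀ x : ℝ, ∫ y, F (x, y)
        = fs x * (H * x ^ (2*H - 2) *
            ((t - x⁻¹) * |t - x⁻¹| ^ (2*H - 2) + x⁻¹ ^ (2*H - 1))) := by
      intro x
      by_cases h : 1/s ≤ x
      · have hx0 : (0:ℝ) < x := lt_of_lt_of_le (one_div_pos.2 hs0) h
        have hre : (fun y => F (x, y))
            = fun y => fs x * (ft y * (H * (2*H - 1) * |x - y| ^ (2*H - 2))) := by
          funext y
          simp only [hF]
          ring
        rw [hre, MeasureTheory.integral_const_mul, (inner_step h1 h2 ht0 hx0).2]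
      · have hz : (fun y => F (x, y)) = fun _ => (0:ℝ) := by
          funext y
          simp only [hF, hfs, if_neg h, zero_mul]
        rw [hz, MeasureTheory.integral_zero]
        simp only [hfs, if_neg h, zero_mul]
    have cond2 : Integrable (fun x => ∫ y, ‖F (x, y)‖) volume := by
      have hre : (fun x => ∫ y, ‖F (x, y)‖) = fun x => fs x * (H * x ^ (2*H - 2) *
          ((t - x⁻¹) * |t - x⁻¹| ^ (2*H - 2) + x⁻¹ ^ (2*H - 1))) := by
        funext x
        rw [← inner_eval x]
        exact integral_congr_ae (Filter.Eventually.of_forall fun y =>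
          Real.norm_of_nonneg (hnn x y))
      rw [hre]
      exact (outer_step h1 h2 hs0 ht0).1
    have hIntProd : Integrable F ((volume : Measure ℝ).prod volume) :=
      (MeasureTheory.integrable_prod_iff hmeas).2
        ⟨Filter.Eventually.of_forall cond1, cond2⟩
    have hInt : Integrable F (volume : Measure (ℝ × ℝ)) := by
      rw [MeasureTheory.Measure.volume_eq_prod]
      exact hIntProd
    have hLHS : ∫ ω, β s ω * β t ω ∂P = ∫ ω, W fs ω * W ft ω ∂P := by
      refine integral_congr_ae (Filter.Eventually.of_forall fun ω => ?_)
      show β s ω * β t ω = W fs ω * W ft ω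
      rw [hβ s hs0 ω, hβ t ht0 ω, hfs, hft, neg_mul_neg]
    rw [hLHS, hCov fs ft hInt]
    have : ∫ p : ℝ × ℝ, F p = (t ^ (2*H) + s ^ (2*H) - |s - t| ^ (2*H)) / 2 := by
      rw [MeasureTheory.Measure.volume_eq_prod, MeasureTheory.integral_prod _ hIntProd]
      rw [integral_congr_ae (Filter.Eventually.of_forall inner_eval)]
      exact (outer_step h1 h2 hs0 ht0).2
    rw [this, abs_of_pos hs0, abs_of_pos ht0, abs_sub_comm t s]
    ring

end TimeInversionAux
/-- Time inversion: if `W` denotes the Wiener integral with respect to a fractional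
Brownian motion with Hurst parameter `H ∈ (1/2,1)` (a jointly Gaussian centered family
with covariance `E[W f · W g] = ∫∫ f(u) g(v) H(2H-1)|u-v|^{2H-2} du dv`), then
`β_t = -∫_{1/t}^∞ u^{-2H} dB^H_u` (with `β_0 = 0`) is a fractional Brownian motion
with Hurst parameter `H`. -/
theorem time_inversion_fbm
    {Ω : Type} [MeasurableSpace Ω] (P : Measure Ω) [IsProbabilityMeasure P]
    (H : ℝ) (hH : H ∈ Set.Ioo (1/2 : ℝ) 1)
    (W : (ℝ → ℝ) → Ω → ℝ)
    (hGauss : ∀ (n : ℕ) (f : Fin n → (ℝ → ℝ)) (c : Fin n → ℝ),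
      ∃ v : NNReal, Measure.map (fun ω => ∑ i, c i * W (f i) ω) P = gaussianReal 0 v)
    (hCov : ∀ f g : ℝ → ℝ,
      Integrable (fun p : ℝ × ℝ =>
        f p.1 * g p.2 * (H * (2*H - 1) * |p.1 - p.2| ^ (2*H - 2))) →
      ∫ ω, W f ω * W g ω ∂P
        = ∫ p : ℝ × ℝ,
            f p.1 * g p.2 * (H * (2*H - 1) * |p.1 - p.2| ^ (2*H - 2)))
    (β : ℝ → Ω → ℝ) (hβ0 : ∀ ω, β 0 ω = 0)
    (hβ : ∀ t : ℝ, 0 < t → ∀ ω,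
      β t ω = - W (fun u => if 1/t ≤ u then u ^ (-(2*H)) else 0) ω) :
    IsFBMLawOn P H (Ici 0) β :=
  time_inversion_fbm_aux P H hH W hGauss hCov β hβ0 hβ
end

section
/- Let H ∈ (1/2,1). For the deterministic covariance of the fBm Wiener integral: if f(u) = u^{−2H} 1_{[1/t,∞)}(u) and g(u) = u^{−2H} 1_{[1/s,∞)}(u) with 0 < s ≤ t, then ∫₀^∞∫₀^∞ f(u) g(v) H(2H−1)|u−v|^{2H−2} du dv = (1/2)(t^{2H} + s^{2H} − (t−s)^{2H}). -/
open MeasureTheory Real Set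

open intervalIntegral
-- change of variables: inv on Ioi 0
lemma tic_inv_cov (g : ℝ → ℝ) :
    ∫ x in Ioi (0:ℝ), g x = ∫ x in Ioi (0:ℝ), (x ^ 2)⁻¹ * g x⁻¹ := by
  have himg : (fun x : ℝ => x⁻¹) '' Ioi 0 = Ioi 0 := by
    ext x
    constructor
    · rintro ⟨y, hy, rfl⟩; exact mem_Ioi.mpr (inv_pos.mpr (mem_Ioi.mp hy))
    · intro hx; exact ⟨x⁻¹, mem_Ioi.mpr (inv_pos.mpr (mem_Ioi.mp hx)), inv_inv x⟩
  calc ∫ x in Ioi (0:ℝ), g x = ∫ x in (fun x : ℝ => x⁻¹) '' Ioi 0, g x := by rw [himg]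
    _ = ∫ x in Ioi (0:ℝ), |-(x^2)⁻¹| • g x⁻¹ := by
        apply integral_image_eq_integral_abs_deriv_smul measurableSet_Ioi
        · intro x hx
          exact (hasDerivAt_inv (ne_of_gt hx)).hasDerivWithinAt
        · intro x hx y hy h
          exact inv_injective h
    _ = ∫ x in Ioi (0:ℝ), (x ^ 2)⁻¹ * g x⁻¹ := by
        apply setIntegral_congr_fun measurableSet_Ioi
        intro x hx
        show |(-(x^2)⁻¹)| • g x⁻¹ = (x^2)⁻¹ * g x⁻¹
        rw [abs_neg, abs_inv, abs_of_nonneg (sq_nonneg x), smul_eq_mul]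

-- ∫_0^s |x-y|^r dy for s ≤ x
lemma tic_ge {r x s : ℝ} (hr : -1 < r) (hs : 0 ≤ s) (hsx : s ≤ x) :
    ∫ y in (0:ℝ)..s, |x - y| ^ r = (x ^ (r+1) - (x - s) ^ (r+1)) / (r+1) := by
  have h1 : ∫ y in (0:ℝ)..s, |x - y| ^ r = ∫ y in (0:ℝ)..s, (x - y) ^ r := by
    apply integral_congr
    intro y hy
    rw [uIcc_of_le hs, mem_Icc] at hy
    show |x - y| ^ r = (x - y) ^ r
    rw [abs_of_nonneg (by linarith [hy.2])]
  rw [h1, integral_comp_sub_left (fun z => z ^ r) x, sub_zero,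
    integral_rpow (Or.inl hr)]

lemma tic_le {r x s : ℝ} (hr : -1 < r) (hx : 0 ≤ x) (hxs : x ≤ s) :
    ∫ y in (0:ℝ)..s, |x - y| ^ r = (x ^ (r+1) + (s - x) ^ (r+1)) / (r+1) := by
  have hr1 : r + 1 ≠ 0 := by linarith
  have i1 : IntervalIntegrable (fun y => |x - y| ^ r) volume 0 x := by
    rw [intervalIntegrable_iff]
    have base := (intervalIntegrable_rpow' (a := x) (b := 0) hr).comp_sub_left x
    rw [sub_self, sub_zero] at base
    apply base.def'.congr_fun ?_ measurableSet_uIoc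
    · intro y hy
      rw [uIoc_of_le hx, mem_Ioc] at hy
      show (x - y) ^ r = |x - y| ^ r
      rw [abs_of_nonneg (by linarith [hy.2])]
  have i2 : IntervalIntegrable (fun y => |x - y| ^ r) volume x s := by
    rw [intervalIntegrable_iff]
    have base := (intervalIntegrable_rpow' (a := 0) (b := s - x) hr).comp_sub_right x
    rw [zero_add, sub_add_cancel] at base
    apply base.def'.congr_fun ?_ measurableSet_uIoc
    · intro y hy
      rw [uIoc_of_le hxs, mem_Ioc] at hy
      show (y - x) ^ r = |x - y| ^ r
      rw [abs_sub_comm, abs_of_nonneg (by linarith [hy.1])]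
  rw [← integral_add_adjacent_intervals i1 i2]
  have e1 : ∫ y in (0:ℝ)..x, |x - y| ^ r = x ^ (r+1) / (r+1) := by
    rw [tic_ge hr hx le_rfl, sub_self, zero_rpow hr1, sub_zero]
  have e2 : ∫ y in x..s, |x - y| ^ r = (s - x) ^ (r+1) / (r+1) := by
    have h1 : ∫ y in x..s, |x - y| ^ r = ∫ y in x..s, (y - x) ^ r := by
      apply integral_congr
      intro y hy
      rw [uIcc_of_le hxs, mem_Icc] at hy
      show |x - y| ^ r = (y - x) ^ r
      rw [abs_sub_comm, abs_of_nonneg (by linarith [hy.1])]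
    rw [h1, integral_comp_sub_right (fun z => z ^ r) x, sub_self,
      integral_rpow (Or.inl hr), zero_rpow hr1, sub_zero]
  rw [e1, e2]
  ring

lemma tic_key {H : ℝ} (c x y : ℝ) (hx : 0 < x) (hy : 0 < y) :
    (x ^ 2)⁻¹ * ((y ^ 2)⁻¹ * ((x⁻¹) ^ (-(2*H)) * (y⁻¹) ^ (-(2*H)) *
      (c * |x⁻¹ - y⁻¹| ^ (2*H-2)))) = c * |x - y| ^ (2*H - 2) := by
  have hxy : x⁻¹ - y⁻¹ = (y - x) / (x * y) := by
    field_simp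
  have habs : |x⁻¹ - y⁻¹| = |x - y| / (x * y) := by
    rw [hxy, abs_div, abs_of_pos (mul_pos hx hy), abs_sub_comm]
  rw [habs, Real.div_rpow (abs_nonneg _) (mul_pos hx hy).le,
    Real.mul_rpow hx.le hy.le, Real.inv_rpow hx.le, Real.inv_rpow hy.le,
    ← Real.rpow_neg hx.le, ← Real.rpow_neg hy.le, neg_neg]
  have hx2 : x ^ (2*H) = x ^ 2 * x ^ (2*H - 2) := by
    rw [← Real.rpow_natCast x 2, ← Real.rpow_add hx]; norm_num
  have hy2 : y ^ (2*H) = y ^ 2 * y ^ (2*H - 2) := by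
    rw [← Real.rpow_natCast y 2, ← Real.rpow_add hy]; norm_num
  have hA : x ^ (2*H - 2) ≠ 0 := (Real.rpow_pos_of_pos hx _).ne'
  have hB : y ^ (2*H - 2) ≠ 0 := (Real.rpow_pos_of_pos hy _).ne'
  rw [hx2, hy2]
  field_simp

/-- The analytic computation behind time inversion of fBm: for `H ∈ (1/2,1)` and
`0 < s ≤ t`, with `f(u) = u^{-2H} 1_{[1/t,∞)}(u)` and `g(v) = v^{-2H} 1_{[1/s,∞)}(v)`,
`∫₀^∞ ∫₀^∞ f(u) g(v) H(2H-1)|u-v|^{2H-2} du dv = (1/2)(t^{2H} + s^{2H} - (t-s)^{2H})`. -/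
theorem time_inversion_covariance_integral
    (H : ℝ) (hH : H ∈ Set.Ioo (1/2 : ℝ) 1) (s t : ℝ) (hs : 0 < s) (hst : s ≤ t) :
    ∫ u in Ioi (0:ℝ), ∫ v in Ioi (0:ℝ),
        (Ici (1/t)).indicator (fun u : ℝ => u ^ (-(2*H))) u *
        (Ici (1/s)).indicator (fun v : ℝ => v ^ (-(2*H))) v *
        (H * (2*H - 1) * |u - v| ^ (2*H - 2))
      = (1/2) * (t ^ (2*H) + s ^ (2*H) - (t - s) ^ (2*H)) := by
  obtain ⟨hH1, hH2⟩ := hH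
  have ht : 0 < t := lt_of_lt_of_le hs hst
  have hr : (-1:ℝ) < 2*H - 2 := by linarith
  have hK : (0:ℝ) < 2*H - 1 := by linarith
  have hK' : (-1:ℝ) < 2*H - 1 := by linarith
  have hKne : (2*H - 1 : ℝ) ≠ 0 := hK.ne'
  have h2H : (2*H : ℝ) ≠ 0 := by positivity
  have hsum : (2*H - 2) + 1 = 2*H - 1 := by ring
  have hsum2 : (2*H - 1) + 1 = 2*H := by ring
  set W : ℝ → ℝ := fun x => H * (2*H - 1) * ∫ y in (0:ℝ)..s, |x - y| ^ (2*H - 2)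
    with hW
  -- Step 2: pointwise identification of the substituted integrand
  have step2 : ∀ x ∈ Ioi (0:ℝ),
      (x ^ 2)⁻¹ * (∫ v in Ioi (0:ℝ),
        (Ici (1/t)).indicator (fun u : ℝ => u ^ (-(2*H))) x⁻¹ *
        (Ici (1/s)).indicator (fun v : ℝ => v ^ (-(2*H))) v *
        (H * (2*H - 1) * |x⁻¹ - v| ^ (2*H - 2)))
      = (Ioc 0 t).indicator W x := by
    intro x hx
    have hx0 : (0:ℝ) < x := hx
    have hx2 : (x:ℝ) ^ 2 ≠ 0 := pow_ne_zero 2 hx0.ne'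
    rw [tic_inv_cov]
    by_cases hxt : x ≤ t
    · have hmemx : x⁻¹ ∈ Ici (1/t) := by
        rw [mem_Ici, one_div]; exact (inv_le_inv₀ ht hx0).mpr hxt
      rw [Set.indicator_of_mem (show x ∈ Ioc 0 t from ⟨hx0, hxt⟩)]
      have hyeq : ∀ y ∈ Ioi (0:ℝ),
          (y ^ 2)⁻¹ * ((Ici (1/t)).indicator (fun u : ℝ => u ^ (-(2*H))) x⁻¹ *
            (Ici (1/s)).indicator (fun v : ℝ => v ^ (-(2*H))) y⁻¹ *
            (H * (2*H - 1) * |x⁻¹ - y⁻¹| ^ (2*H - 2)))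
          = x ^ 2 *
            (Ioc 0 s).indicator (fun y => H * (2*H - 1) * |x - y| ^ (2*H - 2)) y := by
        intro y hy
        have hy0 : (0:ℝ) < y := hy
        rw [Set.indicator_of_mem hmemx]
        by_cases hys : y ≤ s
        · have hmemy : y⁻¹ ∈ Ici (1/s) := by
            rw [mem_Ici, one_div]; exact (inv_le_inv₀ hs hy0).mpr hys
          rw [Set.indicator_of_mem hmemy,
            Set.indicator_of_mem (show y ∈ Ioc 0 s from ⟨hy0, hys⟩)]
          have key := tic_key (H := H) (H * (2*H - 1)) x y hx0 hy0
          rw [← key, ← mul_assoc (x ^ 2), mul_inv_cancel₀ hx2, one_mul]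
        · have hmemy : y⁻¹ ∉ Ici (1/s) := by
            rw [mem_Ici, one_div]
            intro hcon
            exact hys ((inv_le_inv₀ hs hy0).mp hcon)
          rw [Set.indicator_of_notMem hmemy,
            Set.indicator_of_notMem (show y ∉ Ioc 0 s from fun hcon => hys hcon.2)]
          simp
      have hinter : Ioi (0:ℝ) ∩ Ioc 0 s = Ioc 0 s :=
        inter_eq_right.mpr fun y hy => hy.1
      rw [setIntegral_congr_fun measurableSet_Ioi hyeq, MeasureTheory.integral_const_mul,
        ← mul_assoc, inv_mul_cancel₀ hx2, one_mul,
        setIntegral_indicator measurableSet_Ioc, hinter,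
        ← intervalIntegral.integral_of_le hs.le,
        intervalIntegral.integral_const_mul]
    · have hmemx : x⁻¹ ∉ Ici (1/t) := by
        rw [mem_Ici, one_div]
        intro hcon
        exact hxt ((inv_le_inv₀ ht hx0).mp hcon)
      rw [Set.indicator_of_notMem (show x ∉ Ioc 0 t from fun hcon => hxt hcon.2)]
      simp only [Set.indicator_of_notMem hmemx, zero_mul, mul_zero,
        MeasureTheory.integral_zero]
  -- continuity facts
  have contA : Continuous fun x : ℝ => x ^ (2*H-1) := Real.continuous_rpow_const hK.le
  have contB : Continuous fun x : ℝ => (s - x) ^ (2*H-1) :=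
    (continuous_const.sub continuous_id).rpow_const fun x => Or.inr hK.le
  have contC : Continuous fun x : ℝ => (x - s) ^ (2*H-1) :=
    (continuous_id.sub continuous_const).rpow_const fun x => Or.inr hK.le
  -- integrability of W on [0,s] and [s,t]
  have I3a : IntervalIntegrable W volume 0 s := by
    rw [intervalIntegrable_iff]
    have cont : Continuous fun x : ℝ =>
        H * (2*H-1) * ((x ^ (2*H-1) + (s - x) ^ (2*H-1)) / (2*H-1)) := by
      apply continuous_const.mul
      exact (contA.add contB).div_const _
    apply ((cont.intervalIntegrable 0 s).def').congr_fun ?_ measurableSet_uIoc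
    intro x hx
    rw [uIoc_of_le hs.le, mem_Ioc] at hx
    show H * (2*H-1) * ((x ^ (2*H-1) + (s - x) ^ (2*H-1)) / (2*H-1)) = W x
    simp only [hW]
    rw [tic_le hr hx.1.le hx.2, hsum]
  have I3b : IntervalIntegrable W volume s t := by
    rw [intervalIntegrable_iff]
    have cont : Continuous fun x : ℝ =>
        H * (2*H-1) * ((x ^ (2*H-1) - (x - s) ^ (2*H-1)) / (2*H-1)) := by
      apply continuous_const.mul
      exact (contA.sub contC).div_const _
    apply ((cont.intervalIntegrable s t).def').congr_fun ?_ measurableSet_uIoc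
    intro x hx
    rw [uIoc_of_le hst, mem_Ioc] at hx
    show H * (2*H-1) * ((x ^ (2*H-1) - (x - s) ^ (2*H-1)) / (2*H-1)) = W x
    simp only [hW]
    rw [tic_ge hr hs.le hx.1.le, hsum]
  -- value on [0,s]
  have Ea : ∫ x in (0:ℝ)..s, W x
      = H * (2 * (s ^ (2*H) / (2*H))) := by
    have hcongr : EqOn W (fun x : ℝ =>
        H * x ^ (2*H-1) + H * (s - x) ^ (2*H-1)) (uIcc 0 s) := by
      intro x hx
      rw [uIcc_of_le hs.le, mem_Icc] at hx
      simp only [hW]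
      rw [tic_le hr hx.1 hx.2, hsum]
      rw [mul_assoc, mul_div_assoc', mul_div_cancel_left₀ _ hKne]
      ring
    have ia : IntervalIntegrable (fun x : ℝ => H * x ^ (2*H-1)) volume 0 s :=
      (intervalIntegrable_rpow' hK').const_mul H
    have ib : IntervalIntegrable (fun x : ℝ => H * (s - x) ^ (2*H-1)) volume 0 s :=
      ((contB.intervalIntegrable 0 s).const_mul H)
    rw [intervalIntegral.integral_congr hcongr, intervalIntegral.integral_add ia ib,
      intervalIntegral.integral_const_mul, intervalIntegral.integral_const_mul,
      intervalIntegral.integral_comp_sub_left (fun z : ℝ => z ^ (2*H-1)) s,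
      sub_self, sub_zero, integral_rpow (Or.inl hK'), hsum2,
      Real.zero_rpow h2H]
    ring
  -- value on [s,t]
  have Eb : ∫ x in s..t, W x
      = H * ((t ^ (2*H) - s ^ (2*H)) / (2*H)) - H * ((t-s) ^ (2*H) / (2*H)) := by
    have hcongr : EqOn W (fun x : ℝ =>
        H * x ^ (2*H-1) - H * (x - s) ^ (2*H-1)) (uIcc s t) := by
      intro x hx
      rw [uIcc_of_le hst, mem_Icc] at hx
      simp only [hW]
      rw [tic_ge hr hs.le hx.1, hsum]
      rw [mul_assoc, mul_div_assoc', mul_div_cancel_left₀ _ hKne]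
      ring
    have ia : IntervalIntegrable (fun x : ℝ => H * x ^ (2*H-1)) volume s t :=
      (intervalIntegrable_rpow' hK').const_mul H
    have ib : IntervalIntegrable (fun x : ℝ => H * (x - s) ^ (2*H-1)) volume s t :=
      ((contC.intervalIntegrable s t).const_mul H)
    rw [intervalIntegral.integral_congr hcongr, intervalIntegral.integral_sub ia ib,
      intervalIntegral.integral_const_mul, intervalIntegral.integral_const_mul,
      intervalIntegral.integral_comp_sub_right (fun z : ℝ => z ^ (2*H-1)) s,
      sub_self, integral_rpow (Or.inl hK'), integral_rpow (Or.inl hK'), hsum2,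
      Real.zero_rpow h2H]
    ring
  -- assemble
  rw [tic_inv_cov]
  have hinter : Ioi (0:ℝ) ∩ Ioc 0 t = Ioc 0 t :=
    inter_eq_right.mpr fun y hy => hy.1
  rw [setIntegral_congr_fun measurableSet_Ioi step2,
    setIntegral_indicator measurableSet_Ioc, hinter,
    ← intervalIntegral.integral_of_le ht.le,
    ← intervalIntegral.integral_add_adjacent_intervals I3a I3b, Ea, Eb]
  field_simp
  ring
end
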